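/- arXiv:2009.00698 — 4 statements merged into one kernel-verified Lean document; each statement's English description precedes it below -/
import Mathlib

section
/- Let U : ℝ → ℝ be a C² function with 0 < U(ξ) < ν for all ξ ∈ ℝ that satisfies the traveling-wave equation −2U′(ξ) = U″(ξ) + U(ξ)·(1 − A·(log(ν/U(ξ)))^{1−r}) for all ξ ∈ ℝ, together with U(ξ) → 1 as ξ → −∞ and U(ξ) → 0 as ξ → +∞. Then U(ξ) < 1 for all ξ ∈ ℝ and U is nonincreasing on ℝ (U′(ξ) ≤ 0 for all ξ). -/
open Real Filter Set

lemma decr (g g' : ℝ → ℝ) {a b : ℝ} (hab : a ≤ b)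
    (h : ∀ x ∈ Icc a b, HasDerivAt g (g' x) x)
    (hx : ∀ x ∈ Icc a b, g' x ≤ 0) : g b ≤ g a := by
  have hanti : AntitoneOn g (Icc a b) := by
    apply antitoneOn_of_deriv_nonpos (convex_Icc a b)
    · exact fun x hx' => ((h x hx').differentiableAt.continuousAt).continuousWithinAt
    · intro x hx'
      rw [interior_Icc] at hx'
      exact ((h x (Ioo_subset_Icc_self hx')).differentiableAt).differentiableWithinAt
    · intro x hx'
      rw [interior_Icc] at hx'
      rw [(h x (Ioo_subset_Icc_self hx')).deriv]
      exact hx x (Ioo_subset_Icc_self hx')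
  exact hanti (by constructor <;> simp [hab, le_refl]) (by simp [hab]) hab

lemma incr (g g' : ℝ → ℝ) {a b : ℝ} (hab : a ≤ b)
    (h : ∀ x ∈ Icc a b, HasDerivAt g (g' x) x)
    (hx : ∀ x ∈ Icc a b, 0 ≤ g' x) : g a ≤ g b := by
  have := decr (fun t => -g t) (fun t => -g' t) hab
    (fun x hx' => (h x hx').neg) (fun x hx' => neg_nonpos.mpr (hx x hx'))
  simpa using neg_le_neg_iff.mp this

lemma hexp2 (t : ℝ) : HasDerivAt (fun s : ℝ => Real.exp (2*s)) (2 * Real.exp (2*t)) t := by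
  have := ((hasDerivAt_id t).const_mul (2:ℝ)).exp
  simpa [mul_comm] using this

lemma hexpm2 (t : ℝ) : HasDerivAt (fun s : ℝ => Real.exp (-(2*s))) (-2 * Real.exp (-(2*t))) t := by
  have := (((hasDerivAt_id t).const_mul (2:ℝ)).neg).exp
  simp only [id] at this
  exact this.congr_deriv (by simp only [Pi.neg_apply]; ring)

lemma expmulexp (t : ℝ) : Real.exp (-(2*t)) * Real.exp (2*t) = 1 := by
  rw [← Real.exp_add]; norm_num

lemma part2 (F : ℝ → ℝ) (U p : ℝ → ℝ)
    (hUpos : ∀ ξ, 0 < U ξ) (hU1 : ∀ ξ, U ξ ≤ 1)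
    (hVp : ∀ ξ, HasDerivAt U (Real.exp (-(2*ξ)) * p ξ) ξ)
    (hpder : ∀ ξ, HasDerivAt p (-(Real.exp (2*ξ) * F (U ξ))) ξ)
    (hFnonneg : ∀ u, 0 < u → u ≤ 1 → 0 ≤ F u) :
    ∀ ξ, p ξ ≤ 0 := by
  intro ξ₀
  by_contra hcon
  push_neg at hcon
  obtain ⟨c₁, hc₁_def⟩ : ∃ c : ℝ, p ξ₀ = c := ⟨_, rfl⟩
  have hc₁ : 0 < c₁ := hc₁_def ▸ hcon
  have hp'le : ∀ t : ℝ, -(Real.exp (2*t) * F (U t)) ≤ 0 := by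
    intro t
    have := hFnonneg (U t) (hUpos t) (hU1 t)
    nlinarith [Real.exp_pos (2*t)]
  have pmono : ∀ ξ, ξ ≤ ξ₀ → c₁ ≤ p ξ := by
    intro ξ hξ
    exact le_trans (le_of_eq hc₁_def.symm)
      (decr p (fun t => -(Real.exp (2*t) * F (U t))) hξ (fun x _ => hpder x) (fun x _ => hp'le x))
  have hGder : ∀ t : ℝ, HasDerivAt (fun s => U s + c₁/2 * Real.exp (-(2*s)))
      (Real.exp (-(2*t)) * p t - c₁ * Real.exp (-(2*t))) t := by
    intro t
    have := (hVp t).add ((hexpm2 t).const_mul (c₁/2))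
    exact this.congr_deriv (by ring)
  have key : ∀ ξ, ξ ≤ ξ₀ → U ξ + c₁/2 * Real.exp (-(2*ξ)) ≤ U ξ₀ + c₁/2 * Real.exp (-(2*ξ₀)) := by
    intro ξ hξ
    apply incr _ (fun t => Real.exp (-(2*t)) * p t - c₁ * Real.exp (-(2*t))) hξ (fun x _ => hGder x)
    intro x hx
    have h1 := pmono x hx.2
    nlinarith [Real.exp_pos (-(2*x))]
  obtain ⟨D, hD⟩ : ∃ D : ℝ, U ξ₀ + c₁/2 * Real.exp (-(2*ξ₀)) = D := ⟨_, rfl⟩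
  obtain ⟨ξ, hξdef⟩ : ∃ x : ℝ, min ξ₀ (-(Real.log (max (2*D/c₁) 1))/2) = x := ⟨_, rfl⟩
  have hξ0 : ξ ≤ ξ₀ := hξdef ▸ min_le_left _ _
  have hexpge : max (2*D/c₁) 1 ≤ Real.exp (-(2*ξ)) := by
    have h1 : ξ ≤ -(Real.log (max (2*D/c₁) 1))/2 := hξdef ▸ min_le_right _ _
    have h2 : Real.log (max (2*D/c₁) 1) ≤ -(2*ξ) := by linarith
    have h3 := Real.exp_le_exp.mpr h2
    rwa [Real.exp_log (by positivity)] at h3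
  have hDle : D ≤ c₁/2 * Real.exp (-(2*ξ)) := by
    have h1 : 2*D/c₁ ≤ Real.exp (-(2*ξ)) := le_trans (le_max_left _ _) hexpge
    have h2 := mul_le_mul_of_nonneg_left h1 (le_of_lt (by linarith : (0:ℝ) < c₁/2))
    have h3 : c₁/2 * (2*D/c₁) = D := by field_simp
    linarith
  have h4 := key ξ hξ0
  rw [hD] at h4
  have := hUpos ξ
  linarith

set_option maxHeartbeats 1600000 in
lemma part1 (F : ℝ → ℝ) (ν L : ℝ) (hν1 : 1 < ν) (hL : 0 < L)
    (U p : ℝ → ℝ)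
    (hUpos : ∀ ξ, 0 < U ξ) (hUlt : ∀ ξ, U ξ < ν)
    (hVp : ∀ ξ, HasDerivAt U (Real.exp (-(2*ξ)) * p ξ) ξ)
    (hpder : ∀ ξ, HasDerivAt p (-(Real.exp (2*ξ) * F (U ξ))) ξ)
    (hFnonneg : ∀ u, 0 < u → u ≤ 1 → 0 ≤ F u)
    (hFnonpos : ∀ u, 1 ≤ u → u < ν → F u ≤ 0)
    (hFlip : ∀ u, 1/2 ≤ u → u ≤ 1 → F u ≤ L * (1 - u))
    (hlim_top : Tendsto U atTop (nhds 0)) :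
    ∀ ξ, U ξ < 1 := by
  by_contra hcon
  push_neg at hcon
  obtain ⟨ξ₀, hξ₀⟩ := hcon
  have hUc : Continuous U := by
    rw [continuous_iff_continuousAt]; exact fun x => (hVp x).differentiableAt.continuousAt
  have hSne : Set.Nonempty {ξ : ℝ | 1 ≤ U ξ} := ⟨ξ₀, hξ₀⟩
  have hbdd : BddAbove {ξ : ℝ | 1 ≤ U ξ} := by
    have h1 : ∀ᶠ ξ in atTop, U ξ < 1 := hlim_top.eventually (eventually_lt_nhds one_pos)
    obtain ⟨T, hT⟩ := eventually_atTop.mp h1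
    refine ⟨T, fun ξ hξ => ?_⟩
    by_contra h
    push_neg at h
    exact absurd hξ (not_le.mpr (hT ξ h.le))
  have hScl : IsClosed {ξ : ℝ | 1 ≤ U ξ} := isClosed_le continuous_const hUc
  obtain ⟨b, hbdef⟩ : ∃ b : ℝ, sSup {ξ : ℝ | 1 ≤ U ξ} = b := ⟨_, rfl⟩
  have hbS : 1 ≤ U b := hbdef ▸ hScl.csSup_mem hSne hbdd
  have hlt1 : ∀ y, b < y → U y < 1 := by
    intro y hy
    by_contra h
    push_neg at h
    have : y ≤ b := hbdef ▸ le_csSup hbdd h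
    linarith
  have hUb : U b = 1 := by
    refine le_antisymm ?_ hbS
    have htd : Tendsto U (nhdsWithin b (Ioi b)) (nhds (U b)) := (hUc.continuousAt).continuousWithinAt
    apply le_of_tendsto htd
    filter_upwards [eventually_mem_nhdsWithin] with y hy
    exact (hlt1 y hy).le
  have hpb : Real.exp (-(2*b)) * p b ≤ 0 := by
    have hs := hasDerivAt_iff_tendsto_slope.mp (hVp b)
    have hs' : Tendsto (slope U b) (nhdsWithin b (Ioi b)) (nhds (Real.exp (-(2*b)) * p b)) :=
      hs.mono_left (nhdsWithin_mono b (fun y hy => ne_of_gt hy))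
    apply le_of_tendsto hs'
    filter_upwards [eventually_mem_nhdsWithin] with y hy
    have h1 : U y - U b ≤ 0 := by
      have := (hlt1 y hy).le
      rw [hUb]; linarith
    have h2 : (0:ℝ) ≤ y - b := by
      have : b < y := hy
      linarith
    rw [slope_def_field]
    exact div_nonpos_of_nonpos_of_nonneg h1 h2
  have hpb' : p b ≤ 0 := by nlinarith [Real.exp_pos (-(2*b))]
  rcases lt_or_eq_of_le hpb' with hneg | heq
  · -- case p b < 0
    obtain ⟨C, hCdef⟩ : ∃ C : ℝ, -(p b)/2 = C := ⟨_, rfl⟩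
    have hC : 0 < C := by rw [← hCdef]; linarith
    have key : ∀ ξ, (ξ ≤ b ∧ ∀ t, ξ ≤ t → t ≤ b → 1 ≤ U t) →
        1 + C * (Real.exp (-(2*ξ)) - Real.exp (-(2*b))) ≤ U ξ := by
      intro ξ hξ
      obtain ⟨hξb, hξall⟩ := hξ
      have pmono : ∀ t, ξ ≤ t → t ≤ b → p t ≤ p b := by
        intro t ht1 ht2
        apply incr p (fun s => -(Real.exp (2*s) * F (U s))) ht2 (fun x _ => hpder x)
        intro x hx
        have h1 : 1 ≤ U x := hξall x (le_trans ht1 hx.1) hx.2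
        have h2 := hFnonpos (U x) h1 (hUlt x)
        nlinarith [Real.exp_pos (2*x)]
      have hGder : ∀ t : ℝ, HasDerivAt (fun s => U s + (p b)/2 * Real.exp (-(2*s)))
          (Real.exp (-(2*t)) * p t - p b * Real.exp (-(2*t))) t := by
        intro t
        have := (hVp t).add ((hexpm2 t).const_mul ((p b)/2))
        exact this.congr_deriv (by ring)
      have hsign : ∀ x ∈ Icc ξ b, Real.exp (-(2*x)) * p x - p b * Real.exp (-(2*x)) ≤ 0 := by
        intro x hx
        have := pmono x hx.1 hx.2
        nlinarith [Real.exp_pos (-(2*x))]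
      have hdec := decr _ (fun t => Real.exp (-(2*t)) * p t - p b * Real.exp (-(2*t))) hξb
        (fun x _ => hGder x) hsign
      rw [hUb] at hdec
      rw [← hCdef]
      linarith
    have hdUb : Real.exp (-(2*b)) * p b < 0 := by nlinarith [Real.exp_pos (-(2*b))]
    have hev : ∀ᶠ y in nhdsWithin b (Iio b), 1 < U y := by
      have hs := hasDerivAt_iff_tendsto_slope.mp (hVp b)
      have hs' : Tendsto (slope U b) (nhdsWithin b (Iio b)) (nhds (Real.exp (-(2*b)) * p b)) :=
        hs.mono_left (nhdsWithin_mono b (fun y hy => ne_of_lt hy))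
      have h2 : ∀ᶠ y in nhdsWithin b (Iio b), slope U b y < 0 := hs'.eventually (eventually_lt_nhds hdUb)
      filter_upwards [h2, eventually_mem_nhdsWithin] with y h3 h4
      by_contra h5
      push_neg at h5
      have h6 : U y - U b ≤ 0 := by rw [hUb]; linarith
      have h7 : y - b ≤ 0 := by
        have : y < b := h4
        linarith
      have h8 : 0 ≤ slope U b y := by
        rw [slope_def_field]
        exact div_nonneg_iff.mpr (Or.inr ⟨h6, h7⟩)
      linarith
    obtain ⟨l, hl, hIoo⟩ := mem_nhdsLT_iff_exists_Ioo_subset.mp hev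
    have hlb : l < b := hl
    have hmB : ((l+b)/2 ≤ b ∧ ∀ t, (l+b)/2 ≤ t → t ≤ b → 1 ≤ U t) := by
      constructor
      · linarith
      · intro t ht1 ht2
        rcases eq_or_lt_of_le ht2 with h | h
        · rw [h, hUb]
        · exact (hIoo ⟨by linarith, h⟩).le
    by_cases hbdd2 : BddBelow {ξ : ℝ | ξ ≤ b ∧ ∀ t, ξ ≤ t → t ≤ b → 1 ≤ U t}
    · obtain ⟨a, hadef⟩ : ∃ a : ℝ, sInf {ξ : ℝ | ξ ≤ b ∧ ∀ t, ξ ≤ t → t ≤ b → 1 ≤ U t} = a := ⟨_, rfl⟩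
      have hane : Set.Nonempty {ξ : ℝ | ξ ≤ b ∧ ∀ t, ξ ≤ t → t ≤ b → 1 ≤ U t} := ⟨_, hmB⟩
      have ham : a ≤ (l+b)/2 := hadef ▸ csInf_le hbdd2 hmB
      have hab : a < b := by linarith
      have haB : (a ≤ b ∧ ∀ t, a ≤ t → t ≤ b → 1 ≤ U t) := by
        constructor
        · linarith
        · intro t ht1 ht2
          rcases eq_or_lt_of_le ht1 with h | h
          · rw [← h]
            have htd : Tendsto U (nhdsWithin a (Ioi a)) (nhds (U a)) := (hUc.continuousAt).continuousWithinAt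
            apply ge_of_tendsto htd
            have hevb : ∀ᶠ y in nhdsWithin a (Ioi a), y < b :=
              (eventually_lt_nhds hab).filter_mono nhdsWithin_le_nhds
            filter_upwards [hevb, eventually_mem_nhdsWithin] with y h1 h2
            have h3 : sInf {ξ : ℝ | ξ ≤ b ∧ ∀ t, ξ ≤ t → t ≤ b → 1 ≤ U t} < y := by
              rw [hadef]; exact h2
            obtain ⟨ξ, hξBs, hξy⟩ := exists_lt_of_csInf_lt hane h3
            exact hξBs.2 y hξy.le h1.le
          · have h3 : sInf {ξ : ℝ | ξ ≤ b ∧ ∀ t, ξ ≤ t → t ≤ b → 1 ≤ U t} < t := by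
              rw [hadef]; exact h
            obtain ⟨ξ, hξBs, hξy⟩ := exists_lt_of_csInf_lt hane h3
            exact hξBs.2 t hξy.le ht2
      have hUa : 1 < U a := by
        have h1 := key a haB
        have h2 : Real.exp (-(2*b)) < Real.exp (-(2*a)) := Real.exp_lt_exp.mpr (by linarith)
        nlinarith
      have hev2 : ∀ᶠ y in nhds a, 1 < U y := (hUc.continuousAt).eventually (eventually_gt_nhds hUa)
      obtain ⟨ε, hε, hball⟩ := Metric.eventually_nhds_iff.mp hev2
      have hmem : (a - ε/2 ≤ b ∧ ∀ t, a - ε/2 ≤ t → t ≤ b → 1 ≤ U t) := by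
        constructor
        · linarith
        · intro t ht1 ht2
          rcases lt_or_ge t a with h | h
          · apply le_of_lt
            apply hball
            rw [Real.dist_eq, abs_lt]
            constructor <;> linarith
          · exact haB.2 t h ht2
      have hmem' : (a - ε/2) ∈ {ξ : ℝ | ξ ≤ b ∧ ∀ t, ξ ≤ t → t ≤ b → 1 ≤ U t} := hmem
      have h9 := csInf_le hbdd2 hmem'
      rw [hadef] at h9
      linarith
    · rw [not_bddBelow_iff] at hbdd2
      obtain ⟨RR, hRRdef⟩ : ∃ R : ℝ, Real.exp (-(2*b)) + (ν-1)/C = R := ⟨_, rfl⟩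
      have hRR : 0 < RR := by
        rw [← hRRdef]
        have h1 : 0 < (ν-1)/C := div_pos (by linarith) hC
        linarith [Real.exp_pos (-(2*b))]
      obtain ⟨ξ, hξBs, hξlt⟩ := hbdd2 (-(Real.log RR)/2)
      have h1 := key ξ hξBs
      have h2 : RR ≤ Real.exp (-(2*ξ)) := by
        have h3 : Real.log RR ≤ -(2*ξ) := by linarith
        have h4 := Real.exp_le_exp.mpr h3
        rwa [Real.exp_log hRR] at h4
      have h3 : ν - 1 ≤ C * (Real.exp (-(2*ξ)) - Real.exp (-(2*b))) := by
        have h4 : (ν-1)/C ≤ Real.exp (-(2*ξ)) - Real.exp (-(2*b)) := by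
          rw [← hRRdef] at h2; linarith
        have h5 := mul_le_mul_of_nonneg_left h4 hC.le
        have h6 : C * ((ν-1)/C) = ν - 1 := by field_simp
        linarith
      have := hUlt ξ
      linarith
  · -- case p b = 0
    have hev : ∀ᶠ y in nhds b, 1/2 < U y := by
      apply (hUc.continuousAt).eventually
      apply eventually_gt_nhds
      rw [hUb]; norm_num
    obtain ⟨ε, hε, hball⟩ := Metric.eventually_nhds_iff.mp hev
    obtain ⟨δ, hδdef⟩ : ∃ d : ℝ, ε/2 = d := ⟨_, rfl⟩
    have hδ : 0 < δ := by rw [← hδdef]; positivity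
    have hδε : δ < ε := by rw [← hδdef]; linarith
    have hhalf : ∀ t, b ≤ t → t ≤ b + δ → 1/2 ≤ U t ∧ U t ≤ 1 := by
      intro t h1 h2
      constructor
      · apply le_of_lt
        apply hball
        rw [Real.dist_eq, abs_lt]
        constructor <;> linarith
      · rcases eq_or_lt_of_le h1 with h | h
        · rw [← h, hUb]
        · exact (hlt1 t h).le
    have hdd : ∀ t : ℝ, HasDerivAt (fun s => Real.exp (-(2*s)) * p s)
        (-2*(Real.exp (-(2*t)) * p t) - F (U t)) t := by
      intro t
      have h1 := (hexpm2 t).mul (hpder t)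
      have e1 := expmulexp t
      exact h1.congr_deriv (by linear_combination (-(F (U t))) * e1)
    have hφder : ∀ t : ℝ, HasDerivAt (fun s => (1 - U s)^2 + (Real.exp (-(2*s)) * p s)^2)
        (2*(1 - U t)*(-(Real.exp (-(2*t)) * p t)) + 2*(Real.exp (-(2*t)) * p t)*(-2*(Real.exp (-(2*t)) * p t) - F (U t))) t := by
      intro t
      have h1 := ((hasDerivAt_const t (1:ℝ)).sub (hVp t)).pow 2
      have h2 := (hdd t).pow 2
      have h3 := h1.add h2
      exact h3.congr_deriv (by simp only [Pi.sub_apply]; push_cast; ring)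
    obtain ⟨Kc, hKcdef⟩ : ∃ K : ℝ, 2 + L^2 = K := ⟨_, rfl⟩
    have hψ : ∀ t : ℝ, HasDerivAt (fun s => Real.exp (-(Kc*s)) * ((1 - U s)^2 + (Real.exp (-(2*s)) * p s)^2))
        (-Kc * Real.exp (-(Kc*t)) * ((1 - U t)^2 + (Real.exp (-(2*t)) * p t)^2)
         + Real.exp (-(Kc*t)) * (2*(1 - U t)*(-(Real.exp (-(2*t)) * p t)) + 2*(Real.exp (-(2*t)) * p t)*(-2*(Real.exp (-(2*t)) * p t) - F (U t)))) t := by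
      intro t
      have hexpK : HasDerivAt (fun s : ℝ => Real.exp (-(Kc*s))) (-Kc * Real.exp (-(Kc*t))) t := by
        have := (((hasDerivAt_id t).const_mul Kc).neg).exp
        simp only [id] at this
        exact this.congr_deriv (by simp only [Pi.neg_apply]; ring)
      exact hexpK.mul (hφder t)
    have hψle : ∀ t, b ≤ t → t ≤ b + δ →
        -Kc * Real.exp (-(Kc*t)) * ((1 - U t)^2 + (Real.exp (-(2*t)) * p t)^2)
         + Real.exp (-(Kc*t)) * (2*(1 - U t)*(-(Real.exp (-(2*t)) * p t)) + 2*(Real.exp (-(2*t)) * p t)*(-2*(Real.exp (-(2*t)) * p t) - F (U t))) ≤ 0 := by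
      intro t h1 h2
      obtain ⟨ha, hb'⟩ := hhalf t h1 h2
      have hW0 : 0 ≤ 1 - U t := by linarith
      have hFt0 : 0 ≤ F (U t) := hFnonneg (U t) (by linarith) hb'
      have hFtle : F (U t) ≤ L * (1 - U t) := hFlip (U t) ha hb'
      have hKpos : 0 < Real.exp (-(Kc*t)) := Real.exp_pos _
      have hmain : 2*(1 - U t)*(-(Real.exp (-(2*t)) * p t)) + 2*(Real.exp (-(2*t)) * p t)*(-2*(Real.exp (-(2*t)) * p t) - F (U t))
          ≤ Kc * ((1 - U t)^2 + (Real.exp (-(2*t)) * p t)^2) := by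
        rw [← hKcdef]
        nlinarith [sq_nonneg (1 - U t + Real.exp (-(2*t)) * p t),
          sq_nonneg (Real.exp (-(2*t)) * p t + F (U t)),
          sq_nonneg (Real.exp (-(2*t)) * p t), sq_nonneg (1 - U t),
          mul_le_mul hFtle hFtle hFt0 (by positivity), hL.le]
      nlinarith [hKpos, hmain]
    have hdec := decr _ _ (by linarith : b ≤ b + δ) (fun x _ => hψ x)
      (fun x hx => hψle x hx.1 hx.2)
    have hψb : Real.exp (-(Kc*b)) * ((1 - U b)^2 + (Real.exp (-(2*b)) * p b)^2) = 0 := by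
      rw [hUb, heq]; norm_num
    have hexpKpos := Real.exp_pos (-(Kc*(b+δ)))
    have hφle : (1 - U (b+δ))^2 + (Real.exp (-(2*(b+δ))) * p (b+δ))^2 ≤ 0 := by
      by_contra hcon2
      push_neg at hcon2
      have hmp := mul_pos hexpKpos hcon2
      rw [hψb] at hdec
      linarith
    have h1 : (1 - U (b+δ))^2 = 0 :=
      le_antisymm (by linarith [sq_nonneg (Real.exp (-(2*(b+δ))) * p (b+δ))]) (sq_nonneg _)
    have h2 : 1 - U (b+δ) = 0 := sq_eq_zero_iff.mp h1
    have := hlt1 (b+δ) (by linarith)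
    linarith

lemma no_flat (c a₀ M : ℝ) (hc : 0 < c) (V p p' : ℝ → ℝ)
    (hbd : ∀ ξ, 0 < V ξ ∧ V ξ < M)
    (hVp : ∀ ξ, HasDerivAt V (Real.exp (-(2*ξ)) * p ξ) ξ)
    (hder : ∀ ξ, ξ ≤ a₀ → HasDerivAt p (p' ξ) ξ)
    (hle : ∀ ξ, ξ ≤ a₀ → p' ξ ≤ -c * Real.exp (2*ξ)) : False := by
  have hexp : ∀ t : ℝ, HasDerivAt (fun s => Real.exp (2*s)) (2 * Real.exp (2*t)) t := by
    intro t
    have := ((hasDerivAt_id t).const_mul (2:ℝ)).exp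
    simpa [mul_comm] using this
  -- q and its derivative
  set q : ℝ → ℝ := fun t => p t + c/2 * Real.exp (2*t) with hq_def
  have hqder : ∀ ξ, ξ ≤ a₀ → HasDerivAt q (p' ξ + c * Real.exp (2*ξ)) ξ := by
    intro ξ hξ
    have := (hder ξ hξ).add ((hexp ξ).const_mul (c/2))
    exact this.congr_deriv (by ring)
  have hqle : ∀ ξ, ξ ≤ a₀ → p' ξ + c * Real.exp (2*ξ) ≤ 0 := by
    intro ξ hξ
    have := hle ξ hξ
    nlinarith [Real.exp_pos (2*ξ)]
  by_cases hq0 : ∃ a₁, a₁ ≤ a₀ ∧ 0 < q a₁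
  · obtain ⟨a₁, ha₁, hKpos⟩ := hq0
    obtain ⟨K, hK_def⟩ : ∃ K : ℝ, q a₁ = K := ⟨_, rfl⟩
    have hK : 0 < K := hK_def ▸ hKpos
    -- V' ξ ≥ K e^{-2ξ} - c/2 for ξ ≤ a₁
    have hqmono : ∀ ξ, ξ ≤ a₁ → K ≤ q ξ := by
      intro ξ hξ
      exact hK_def ▸ decr q (fun t => p' t + c * Real.exp (2*t)) hξ
        (fun x hx => hqder x (le_trans hx.2 ha₁))
        (fun x hx => hqle x (le_trans hx.2 ha₁))
    set G : ℝ → ℝ := fun t => V t + K/2 * Real.exp (-(2*t)) + c/2 * t with hG_def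
    have hGder : ∀ t : ℝ, HasDerivAt G (Real.exp (-(2*t)) * p t - K * Real.exp (-(2*t)) + c/2) t := by
      intro t
      have h1 : HasDerivAt (fun s : ℝ => Real.exp (-(2*s))) (-2 * Real.exp (-(2*t))) t := by
        have := ((hasDerivAt_id t).const_mul (2:ℝ)).neg.exp
        simpa [mul_comm] using this
      have := ((hVp t).add (h1.const_mul (K/2))).add ((hasDerivAt_id t).const_mul (c/2))
      exact this.congr_deriv (by ring)
    have hGpos : ∀ t, t ≤ a₁ → 0 ≤ Real.exp (-(2*t)) * p t - K * Real.exp (-(2*t)) + c/2 := by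
      intro t ht
      have h1 : K ≤ q t := hqmono t ht
      have h2 : K - c/2 * Real.exp (2*t) ≤ p t := by simp only [hq_def] at h1; linarith
      have e1 : Real.exp (-(2*t)) * Real.exp (2*t) = 1 := by
        rw [← Real.exp_add]; norm_num
      have h3 : Real.exp (-(2*t)) * (K - c/2 * Real.exp (2*t)) ≤ Real.exp (-(2*t)) * p t := by
        apply mul_le_mul_of_nonneg_left h2 (Real.exp_pos _).le
      nlinarith [Real.exp_pos (-(2*t))]
    have key : ∀ ξ, ξ ≤ a₁ → V ξ ≤ G a₁ - K/2 * Real.exp (-(2*ξ)) - c/2 * ξ := by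
      intro ξ hξ
      have := incr G _ hξ (fun x _ => hGder x) (fun x hx => hGpos x (le_trans hx.2 (le_refl a₁)))
      simp only [hG_def] at this ⊢
      linarith
    -- choose ξ very negative
    clear_value q G
    obtain ⟨E, hE_def⟩ : ∃ E : ℝ, max (G a₁) 0 + 1 = E := ⟨_, rfl⟩
    obtain ⟨R, hR_def⟩ : ∃ R : ℝ, (2/K) * (E + c/2) = R := ⟨_, rfl⟩
    obtain ⟨ξ, hξ_def⟩ : ∃ x : ℝ, min a₁ (min (-1) (-Real.log (max R 1))) = x := ⟨_, rfl⟩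
    have hξa₁ : ξ ≤ a₁ := hξ_def ▸ min_le_left _ _
    have hξ1 : ξ ≤ -1 := hξ_def ▸ le_trans (min_le_right _ _) (min_le_left _ _)
    have hξR : ξ ≤ -Real.log (max R 1) := hξ_def ▸ le_trans (min_le_right _ _) (min_le_right _ _)
    have hexpR : R ≤ Real.exp (-ξ) := by
      have h1 : Real.log (max R 1) ≤ -ξ := by linarith
      have := Real.exp_le_exp.mpr h1
      rw [Real.exp_log (by positivity : (0:ℝ) < max R 1)] at this
      exact le_trans (le_max_left _ _) this
    have hexpξ : -ξ ≤ Real.exp (-ξ) := by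
      have := Real.add_one_le_exp (-ξ); linarith
    have hgrow : G a₁ ≤ K/2 * Real.exp (-(2*ξ)) + c/2 * ξ := by
      have h2 : Real.exp (-(2*ξ)) = Real.exp (-ξ) * Real.exp (-ξ) := by
        rw [← Real.exp_add]; ring_nf
      have h3 : (-ξ) * Real.exp (-ξ) ≤ Real.exp (-(2*ξ)) := by
        rw [h2]
        apply mul_le_mul_of_nonneg_right hexpξ (Real.exp_pos _).le
      have h4 : E + c/2 ≤ K/2 * Real.exp (-ξ) := by
        have hKR : K/2 * R = E + c/2 := by
          rw [← hR_def]; field_simp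
        have := mul_le_mul_of_nonneg_left hexpR (le_of_lt (by linarith : (0:ℝ) < K/2))
        linarith
      have hE0 : (0:ℝ) ≤ E := by
        have : (0:ℝ) ≤ max (G a₁) 0 := le_max_right _ _
        rw [← hE_def]; linarith
      have h5 : E ≤ (-ξ) * (K/2 * Real.exp (-ξ) - c/2) := by
        calc E = 1 * E := (one_mul E).symm
          _ ≤ (-ξ) * (K/2 * Real.exp (-ξ) - c/2) :=
            mul_le_mul (by linarith) (by linarith) hE0 (by linarith)
      have h6 : K/2 * ((-ξ) * Real.exp (-ξ)) ≤ K/2 * Real.exp (-(2*ξ)) :=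
        mul_le_mul_of_nonneg_left h3 (by linarith)
      have hE1 : G a₁ ≤ E - 1 := by
        have : G a₁ ≤ max (G a₁) 0 := le_max_left _ _
        rw [← hE_def]; linarith
      have hexpand : (-ξ) * (K/2 * Real.exp (-ξ) - c/2)
          = K/2 * ((-ξ) * Real.exp (-ξ)) + c/2 * ξ := by ring
      linarith [h5, h6, hE1, hexpand]
    have := key ξ hξa₁
    have := (hbd ξ).1
    linarith
  · push_neg at hq0
    have hV' : ∀ t, t ≤ a₀ → Real.exp (-(2*t)) * p t ≤ -c/2 := by
      intro t ht
      have h1 : q t ≤ 0 := hq0 t ht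
      have h2 : p t ≤ -(c/2) * Real.exp (2*t) := by simp only [hq_def] at h1; linarith
      have e1 : Real.exp (-(2*t)) * Real.exp (2*t) = 1 := by rw [← Real.exp_add]; norm_num
      have h3 : Real.exp (-(2*t)) * p t ≤ Real.exp (-(2*t)) * (-(c/2) * Real.exp (2*t)) :=
        mul_le_mul_of_nonneg_left h2 (Real.exp_pos _).le
      nlinarith
    have hM : 0 < M := lt_trans (hbd a₀).1 (hbd a₀).2
    obtain ⟨ξ, hξ_def⟩ : ∃ x : ℝ, a₀ - 2*M/c - 1 = x := ⟨_, rfl⟩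
    have hξa₀ : ξ ≤ a₀ := by
      have : 0 < 2*M/c := by positivity
      rw [← hξ_def]; linarith
    have hH : V a₀ + c/2 * a₀ ≤ V ξ + c/2 * ξ := by
      apply decr (fun t => V t + c/2 * t) (fun t => Real.exp (-(2*t)) * p t + c/2) hξa₀
      · intro x _
        have h := (hVp x).add ((hasDerivAt_id x).const_mul (c/2))
        exact h.congr_deriv (by simp)
      · intro x hx
        have := hV' x hx.2
        linarith
    have h1 : V a₀ + (c/2) * (a₀ - ξ) ≤ V ξ := by linarith
    have h2 : (c/2) * (a₀ - ξ) = M + c/2 := by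
      rw [← hξ_def]; field_simp; ring
    have := (hbd ξ).2
    have := (hbd a₀).1
    linarith


/-- monotonicity and boundedness by 1 of traveling waves. -/
theorem stmt_0 (r A : ℝ) (hr : 1 < r) (hA : 0 < A)
    (ν : ℝ) (hν : ν = Real.exp (A ^ (-(1 / (r - 1)))))
    (U : ℝ → ℝ) (hUreg : ContDiff ℝ 2 U)
    (hUpos : ∀ ξ : ℝ, 0 < U ξ) (hUlt : ∀ ξ : ℝ, U ξ < ν)
    (hODE : ∀ ξ : ℝ, -2 * deriv U ξ =
      deriv (deriv U) ξ + U ξ * (1 - A * Real.log (ν / U ξ) ^ (1 - r)))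
    (hlim_bot : Tendsto U atBot (nhds 1))
    (hlim_top : Tendsto U atTop (nhds 0)) :
    (∀ ξ : ℝ, U ξ < 1) ∧ (∀ ξ : ℝ, deriv U ξ ≤ 0) := by
  have hd1 : Differentiable ℝ U := hUreg.differentiable (by norm_num)
  have hd2 : Differentiable ℝ (deriv U) := by
    have h2 : ContDiff ℝ (1+1) U := by norm_num at hUreg ⊢; exact hUreg
    exact (contDiff_succ_iff_deriv.mp h2).2.2.differentiable (by norm_num)
  obtain ⟨F, hFdef⟩ : ∃ F : ℝ → ℝ,
      (fun u => u * (1 - A * Real.log (ν / u) ^ (1 - r))) = F := ⟨_, rfl⟩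
  have hFu : ∀ u, F u = u * (1 - A * Real.log (ν / u) ^ (1 - r)) := fun u => by rw [← hFdef]
  obtain ⟨p, hpdef⟩ : ∃ p : ℝ → ℝ, (fun ξ : ℝ => Real.exp (2*ξ) * deriv U ξ) = p := ⟨_, rfl⟩
  have hpu : ∀ ξ, p ξ = Real.exp (2*ξ) * deriv U ξ := fun ξ => by rw [← hpdef]
  have hODE' : ∀ ξ, deriv (deriv U) ξ = -2 * deriv U ξ - F (U ξ) := by
    intro ξ
    have h := hODE ξ
    rw [hFu]
    linarith
  have hpder : ∀ ξ, HasDerivAt p (-(Real.exp (2*ξ) * F (U ξ))) ξ := by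
    intro ξ
    rw [← hpdef]
    have h := (hexp2 ξ).mul ((hd2 ξ).hasDerivAt)
    exact h.congr_deriv (by rw [hODE' ξ]; ring)
  have hVp : ∀ ξ, HasDerivAt U (Real.exp (-(2*ξ)) * p ξ) ξ := by
    intro ξ
    have h := (hd1 ξ).hasDerivAt
    have e1 := expmulexp ξ
    have h2 : Real.exp (-(2*ξ)) * p ξ = deriv U ξ := by
      rw [hpu]
      linear_combination (deriv U ξ) * e1
    rw [h2]
    exact h
  have hrne : r - 1 ≠ 0 := ne_of_gt (by linarith)
  have hAexp : (A ^ (-(1/(r-1)))) ^ (1-r) = A := by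
    rw [← Real.rpow_mul hA.le]
    rw [show (-(1/(r-1))) * (1-r) = 1 by field_simp; ring]
    exact Real.rpow_one A
  have hlogν : Real.log ν = A ^ (-(1/(r-1))) := by rw [hν, Real.log_exp]
  have hF1 : F 1 = 1 - A*A := by
    rw [hFu, div_one, hlogν, hAexp]
    ring
  have hν1 : 1 < ν := by
    rw [hν]
    have h1 : 0 < A ^ (-(1/(r-1))) := Real.rpow_pos_of_pos hA _
    calc (1:ℝ) = Real.exp 0 := Real.exp_zero.symm
      _ < _ := Real.exp_lt_exp.mpr h1
  have hA1 : A = 1 := by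
    by_contra hAne
    have hlogpos : Real.log (ν / 1) ≠ 0 := by
      rw [div_one, hlogν]
      exact ne_of_gt (Real.rpow_pos_of_pos hA _)
    have hFcont : ContinuousAt F 1 := by
      rw [← hFdef]
      have hdiv : ContinuousAt (fun u : ℝ => ν / u) 1 :=
        continuousAt_const.div continuousAt_id one_ne_zero
      have hlog : ContinuousAt (fun u : ℝ => Real.log (ν / u)) 1 :=
        (Real.continuousAt_log (by rw [div_one]; linarith)).comp hdiv
      have hrpow : ContinuousAt (fun u : ℝ => Real.log (ν / u) ^ (1-r)) 1 :=
        hlog.rpow_const (Or.inl hlogpos)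
      exact continuousAt_id.mul (continuousAt_const.sub (continuousAt_const.mul hrpow))
    have hFlim : Tendsto (fun ξ => F (U ξ)) atBot (nhds (F 1)) := (hFcont.tendsto).comp hlim_bot
    rcases lt_or_gt_of_ne hAne with hlt | hgt
    · have hc : 0 < (1 - A*A)/2 := by nlinarith
      have hev : ∀ᶠ ξ in atBot, (1-A*A)/2 < F (U ξ) :=
        hFlim.eventually (eventually_gt_nhds (by rw [hF1]; nlinarith))
      obtain ⟨a₀, ha₀⟩ := eventually_atBot.mp hev
      exact no_flat ((1-A*A)/2) a₀ ν hc U p (fun ξ => -(Real.exp (2*ξ) * F (U ξ)))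
        (fun ξ => ⟨hUpos ξ, hUlt ξ⟩) hVp (fun ξ _ => hpder ξ)
        (fun ξ hξ => by have := ha₀ ξ hξ; nlinarith [Real.exp_pos (2*ξ)])
    · have hc : 0 < (A*A-1)/2 := by nlinarith
      have hev : ∀ᶠ ξ in atBot, F (U ξ) < -((A*A-1)/2) :=
        hFlim.eventually (eventually_lt_nhds (by rw [hF1]; nlinarith))
      obtain ⟨a₀, ha₀⟩ := eventually_atBot.mp hev
      refine no_flat ((A*A-1)/2) a₀ ν hc (fun ξ => ν - U ξ) (fun ξ => -p ξ)
        (fun ξ => Real.exp (2*ξ) * F (U ξ))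
        (fun ξ => ⟨show (0:ℝ) < ν - U ξ by linarith [hUlt ξ], show ν - U ξ < ν by linarith [hUpos ξ]⟩)
        (fun ξ => ?_) (fun ξ _ => ?_) (fun ξ hξ => ?_)
      · have h := (hasDerivAt_const ξ ν).sub (hVp ξ)
        exact h.congr_deriv (by beta_reduce; ring)
      · have h := (hpder ξ).neg
        exact h.congr_deriv (by beta_reduce; ring)
      · have := ha₀ ξ hξ
        nlinarith [Real.exp_pos (2*ξ)]
  subst hA1
  have hν' : ν = Real.exp 1 := by rw [hν, Real.one_rpow]
  have hlogu : ∀ u : ℝ, 0 < u → Real.log (ν / u) = 1 - Real.log u := by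
    intro u hu
    rw [hν', Real.log_div (Real.exp_ne_zero 1) (ne_of_gt hu), Real.log_exp]
  have hFpos' : ∀ u : ℝ, 0 < u → u < 1 → 0 < F u := by
    intro u h0 h1
    rw [hFu, hlogu u h0, one_mul]
    have hlu : Real.log u < 0 := Real.log_neg h0 h1
    have hs : 1 < 1 - Real.log u := by linarith
    have := Real.rpow_lt_one_of_one_lt_of_neg hs (by linarith : 1 - r < 0)
    nlinarith
  have hF1' : F 1 = 0 := by rw [hF1]; ring
  have hFnonneg : ∀ u : ℝ, 0 < u → u ≤ 1 → 0 ≤ F u := by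
    intro u h0 h1
    rcases eq_or_lt_of_le h1 with h | h
    · rw [h, hF1']
    · exact (hFpos' u h0 h).le
  have hFnonpos : ∀ u : ℝ, 1 ≤ u → u < ν → F u ≤ 0 := by
    intro u h1 h2
    have h0 : 0 < u := by linarith
    rw [hFu, hlogu u h0, one_mul]
    have hlu : 0 ≤ Real.log u := Real.log_nonneg h1
    have hlu2 : Real.log u < 1 := by
      have h3 := Real.log_lt_log h0 h2
      rwa [hν', Real.log_exp] at h3
    have hs1 : 0 < 1 - Real.log u := by linarith
    have hs2 : 1 - Real.log u ≤ 1 := by linarith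
    have h4 : 1 ≤ (1 - Real.log u) ^ (1-r) :=
      Real.one_le_rpow_of_pos_of_le_one_of_nonpos hs1 hs2 (by linarith)
    nlinarith
  have hFlip : ∀ u : ℝ, 1/2 ≤ u → u ≤ 1 → F u ≤ (2*(r-1)) * (1 - u) := by
    intro u h0 h1
    have hu0 : 0 < u := by linarith
    rw [hFu, hlogu u hu0, one_mul]
    have hlu : Real.log u ≤ 0 := Real.log_nonpos (by linarith) h1
    have hs1 : (0:ℝ) < 1 - Real.log u := by linarith
    have hstep1 : 1 + Real.log (1 - Real.log u) * (1-r) ≤ (1 - Real.log u) ^ (1-r) := by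
      rw [Real.rpow_def_of_pos hs1]
      have := Real.add_one_le_exp (Real.log (1 - Real.log u) * (1-r))
      linarith
    have hstep2 : Real.log (1 - Real.log u) ≤ -Real.log u := by
      have := Real.log_le_sub_one_of_pos hs1
      linarith
    have hstep3 : -Real.log u ≤ 1/u - 1 := by
      have h2 := Real.log_le_sub_one_of_pos (show (0:ℝ) < 1/u by positivity)
      rw [Real.log_div one_ne_zero (ne_of_gt hu0), Real.log_one] at h2
      linarith
    have hstep4 : 1/u - 1 ≤ 2*(1-u) := by
      have h3 : 1/u ≤ 2*(1-u) + 1 := (div_le_iff₀ hu0).mpr (by nlinarith)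
      linarith
    have hchain : 1 - (1 - Real.log u) ^ (1-r) ≤ 2*(r-1)*(1-u) := by nlinarith
    have hsle1 : (1 - Real.log u) ^ (1-r) ≤ 1 :=
      Real.rpow_le_one_of_one_le_of_nonpos (by linarith) (by linarith)
    nlinarith [mul_nonneg (by linarith : (0:ℝ) ≤ 1 - u)
      (by linarith : (0:ℝ) ≤ 1 - (1 - Real.log u) ^ (1-r))]
  have hU1 := part1 F ν (2*(r-1)) hν1 (by linarith) U p hUpos hUlt hVp hpder
    hFnonneg hFnonpos hFlip hlim_top
  have hple := part2 F U p hUpos (fun ξ => (hU1 ξ).le) hVp hpder hFnonneg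
  refine ⟨hU1, fun ξ => ?_⟩
  have h1 := hple ξ
  have h2 : deriv U ξ = Real.exp (-(2*ξ)) * p ξ := by
    rw [hpu]
    linear_combination (-(deriv U ξ)) * expmulexp ξ
  rw [h2]
  nlinarith [Real.exp_pos (-(2*ξ))]
end

section
/- Let U be a minimal-speed traveling wave. Then there exists κ > 0 such that U(ξ)/(ξ·e^{−ξ}) → κ as ξ → +∞. -/
open Real Filter

noncomputable def WW (U : ℝ → ℝ) (ξ : ℝ) : ℝ := Real.exp ξ * U ξ
noncomputable def WW1 (U : ℝ → ℝ) (ξ : ℝ) : ℝ := Real.exp ξ * (U ξ + deriv U ξ)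
noncomputable def PP (r A ν : ℝ) (U : ℝ → ℝ) (ξ : ℝ) : ℝ := A * Real.log (ν / U ξ) ^ (1 - r)


lemma hasDerivAt_WW (U : ℝ → ℝ) (hd1 : Differentiable ℝ U) (ξ : ℝ) :
    HasDerivAt (WW U) (WW1 U ξ) ξ := by
  have h := (Real.hasDerivAt_exp ξ).mul (hd1 ξ).hasDerivAt
  exact h.congr_deriv (by unfold WW1; ring)

lemma hasDerivAt_WW1 (r A ν : ℝ) (U : ℝ → ℝ)
    (hd1 : Differentiable ℝ U) (hd2 : Differentiable ℝ (deriv U))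
    (hODE : ∀ ξ : ℝ, -2 * deriv U ξ =
      deriv (deriv U) ξ + U ξ * (1 - A * Real.log (ν / U ξ) ^ (1 - r))) (ξ : ℝ) :
    HasDerivAt (WW1 U) (WW U ξ * PP r A ν U ξ) ξ := by
  have h := (Real.hasDerivAt_exp ξ).mul ((hd1 ξ).hasDerivAt.add (hd2 ξ).hasDerivAt)
  have h2 := hODE ξ
  exact h.congr_deriv (by unfold WW PP; simp only [Pi.add_apply]; nlinarith [Real.exp_pos ξ, h2])


lemma PP_pos (r A ν : ℝ) (hA : 0 < A) (hν1 : 1 < ν) (U : ℝ → ℝ)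
    (hUpos : ∀ ξ, 0 < U ξ) (hUlt : ∀ ξ, U ξ < 1) (ξ : ℝ) :
    0 < PP r A ν U ξ := by
  have h1 : 1 < ν / U ξ := (one_lt_div (hUpos ξ)).mpr ((hUlt ξ).trans hν1)
  exact mul_pos hA (Real.rpow_pos_of_pos (Real.log_pos h1) _)

lemma PP_tendsto (r A ν : ℝ) (hr : 1 < r) (hν1 : 1 < ν) (U : ℝ → ℝ)
    (hUpos : ∀ ξ, 0 < U ξ) (hlim_top : Tendsto U atTop (nhds 0)) :
    Tendsto (PP r A ν U) atTop (nhds 0) := by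
  have hν0 : (0:ℝ) < ν := lt_trans one_pos hν1
  have hlog : Tendsto (fun ξ => Real.log (U ξ)) atTop atBot :=
    Real.tendsto_log_nhdsGT_zero.comp
      (tendsto_nhdsWithin_iff.mpr ⟨hlim_top, Eventually.of_forall fun ξ => Set.mem_Ioi.mpr (hUpos ξ)⟩)
  have hL : Tendsto (fun ξ => Real.log (ν / U ξ)) atTop atTop := by
    have h1 : Tendsto (fun ξ => Real.log ν + -Real.log (U ξ)) atTop atTop :=
      tendsto_atTop_add_const_left _ _ (tendsto_neg_atBot_atTop.comp hlog)
    refine h1.congr fun ξ => ?_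
    rw [Real.log_div (ne_of_gt hν0) (ne_of_gt (hUpos ξ))]; ring
  have h2 : Tendsto (fun ξ => Real.log (ν / U ξ) ^ (-(r-1))) atTop (nhds 0) :=
    (tendsto_rpow_neg_atTop (by linarith)).comp hL
  have h3 : Tendsto (PP r A ν U) atTop (nhds (A * 0)) := by
    refine (tendsto_const_nhds.mul h2).congr fun ξ => ?_
    unfold PP
    norm_num
  simpa using h3

noncomputable def aa : ℝ := 1 - Real.sqrt 2 / 2

lemma sqrt2_lt_two : Real.sqrt 2 < 2 := by
  nlinarith [Real.sq_sqrt (by norm_num : (2:ℝ) ≥ 0), Real.sqrt_nonneg 2]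

lemma aa_pos : 0 < aa := by
  unfold aa; nlinarith [sqrt2_lt_two]

/-- exponential decay bound for U -/
lemma decay (r A ν : ℝ) (U : ℝ → ℝ)
    (hd1 : Differentiable ℝ U) (hd2 : Differentiable ℝ (deriv U))
    (hUpos : ∀ ξ, 0 < U ξ)
    (hODE : ∀ ξ : ℝ, -2 * deriv U ξ =
      deriv (deriv U) ξ + U ξ * (1 - A * Real.log (ν / U ξ) ^ (1 - r)))
    (hP : Tendsto (PP r A ν U) atTop (nhds 0)) :
    ∃ ξ0 C : ℝ, 0 < C ∧ ∀ ξ ≥ ξ0, U ξ ≤ C * Real.exp (-(aa * ξ)) := by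
  obtain ⟨ξ0, hξ0⟩ := eventually_atTop.mp (hP.eventually (eventually_le_nhds one_half_pos))
  set s2 : ℝ := Real.sqrt 2 with hs2
  have hs2sq : s2 ^ 2 = 2 := Real.sq_sqrt (by norm_num)
  have hs2pos : 0 < s2 := Real.sqrt_pos.mpr (by norm_num)
  set a : ℝ := aa with ha
  set b : ℝ := 1 + s2 / 2 with hb
  have hab : a + b = 2 := by rw [ha, hb]; unfold aa; ring
  have hab2 : a * b = 1 / 2 := by rw [ha, hb]; unfold aa; nlinarith [hs2sq]
  have hba : b - a = s2 := by rw [ha, hb]; unfold aa; ring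
  -- the function g = U' + aU and φ = e^{bξ} g
  set g : ℝ → ℝ := fun ξ => deriv U ξ + a * U ξ with hg
  set φ : ℝ → ℝ := fun ξ => Real.exp (b * ξ) * g ξ with hφ
  have hφd : ∀ ξ, HasDerivAt φ
      (Real.exp (b * ξ) * (b * g ξ + (deriv (deriv U) ξ + a * deriv U ξ))) ξ := by
    intro ξ
    have he : HasDerivAt (fun ξ : ℝ => Real.exp (b * ξ)) (Real.exp (b * ξ) * b) ξ := by
      simpa using ((hasDerivAt_id ξ).const_mul b).exp
    have hgd : HasDerivAt g (deriv (deriv U) ξ + a * deriv U ξ) ξ :=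
      (hd2 ξ).hasDerivAt.add ((hd1 ξ).hasDerivAt.const_mul a)
    have := he.mul hgd
    exact this.congr_deriv (by ring)
  have hφdiff : Differentiable ℝ φ := fun ξ => (hφd ξ).differentiableAt
  have hφ'le : ∀ ξ ≥ ξ0, deriv φ ξ ≤ 0 := by
    intro ξ hξ
    rw [(hφd ξ).deriv]
    have hode := hODE ξ
    have hPle := hξ0 ξ hξ
    have hUp := hUpos ξ
    have key : b * g ξ + (deriv (deriv U) ξ + a * deriv U ξ)
        = U ξ * (PP r A ν U ξ - 1/2) := by
      unfold PP at *
      simp only [hg]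
      linear_combination deriv U ξ * hab + U ξ * hab2 - hode
    rw [key]
    have : U ξ * (PP r A ν U ξ - 1/2) ≤ 0 := by
      have := hξ0 ξ hξ
      nlinarith
    exact mul_nonpos_of_nonneg_of_nonpos (Real.exp_pos _).le this
  have hφanti : AntitoneOn φ (Set.Ici ξ0) := by
    refine antitoneOn_of_deriv_nonpos (convex_Ici ξ0) hφdiff.continuous.continuousOn
      hφdiff.differentiableOn ?_
    intro x hx
    rw [interior_Ici] at hx
    exact hφ'le x (le_of_lt hx)
  set C1 : ℝ := max (φ ξ0) 0 with hC1
  have hC1nn : 0 ≤ C1 := le_max_right _ _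
  have hgle : ∀ ξ ≥ ξ0, g ξ ≤ C1 * Real.exp (-(b * ξ)) := by
    intro ξ hξ
    have h1 : φ ξ ≤ C1 := (hφanti Set.self_mem_Ici hξ hξ).trans (le_max_left _ _)
    have h2 : Real.exp (b * ξ) * g ξ ≤ C1 := h1
    have h3 : g ξ ≤ C1 / Real.exp (b * ξ) :=
      (le_div_iff₀ (Real.exp_pos _)).mpr (by linarith [h2])
    rw [Real.exp_neg, ← div_eq_mul_inv]; exact h3
  -- now χ = e^{aξ} U + (C1/√2) e^{-√2 ξ}
  set χ : ℝ → ℝ := fun ξ => Real.exp (a * ξ) * U ξ + (C1 / s2) * Real.exp (-(s2 * ξ)) with hχ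
  have hχd : ∀ ξ, HasDerivAt χ
      (Real.exp (a * ξ) * g ξ - C1 * Real.exp (-(s2 * ξ))) ξ := by
    intro ξ
    have he : HasDerivAt (fun ξ : ℝ => Real.exp (a * ξ)) (Real.exp (a * ξ) * a) ξ := by
      simpa using ((hasDerivAt_id ξ).const_mul a).exp
    have h1 : HasDerivAt (fun ξ => Real.exp (a * ξ) * U ξ)
        (Real.exp (a * ξ) * a * U ξ + Real.exp (a * ξ) * deriv U ξ) ξ :=
      he.mul (hd1 ξ).hasDerivAt
    have he2 : HasDerivAt (fun ξ : ℝ => Real.exp (-(s2 * ξ))) (Real.exp (-(s2 * ξ)) * (-s2)) ξ := by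
      simpa [neg_mul] using ((hasDerivAt_id ξ).const_mul (-s2)).exp
    have h2 := h1.add (he2.const_mul (C1 / s2))
    refine h2.congr_deriv ?_
    rw [hg]
    field_simp
    ring
  have hχdiff : Differentiable ℝ χ := fun ξ => (hχd ξ).differentiableAt
  have hχ'le : ∀ ξ ≥ ξ0, deriv χ ξ ≤ 0 := by
    intro ξ hξ
    rw [(hχd ξ).deriv]
    have h1 : Real.exp (a * ξ) * g ξ ≤ Real.exp (a * ξ) * (C1 * Real.exp (-(b * ξ))) :=
      mul_le_mul_of_nonneg_left (hgle ξ hξ) (Real.exp_pos _).le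
    have h2 : Real.exp (a * ξ) * (C1 * Real.exp (-(b * ξ))) = C1 * Real.exp (-(s2 * ξ)) := by
      rw [mul_comm (Real.exp (a*ξ)), mul_assoc, ← Real.exp_add]
      congr 2
      rw [← hba]; ring
    linarith [h1, h2.le, h2.ge]
  have hχanti : AntitoneOn χ (Set.Ici ξ0) := by
    refine antitoneOn_of_deriv_nonpos (convex_Ici ξ0) hχdiff.continuous.continuousOn
      hχdiff.differentiableOn ?_
    intro x hx
    rw [interior_Ici] at hx
    exact hχ'le x (le_of_lt hx)
  refine ⟨ξ0, χ ξ0, ?_, ?_⟩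
  · have : 0 < Real.exp (a * ξ0) * U ξ0 := mul_pos (Real.exp_pos _) (hUpos ξ0)
    have h2 : 0 ≤ (C1 / s2) * Real.exp (-(s2 * ξ0)) :=
      mul_nonneg (div_nonneg hC1nn hs2pos.le) (Real.exp_pos _).le
    rw [hχ]; dsimp only; linarith
  · intro ξ hξ
    have h1 : χ ξ ≤ χ ξ0 := hχanti Set.self_mem_Ici hξ hξ
    have h2 : Real.exp (a * ξ) * U ξ ≤ χ ξ := by
      have : 0 ≤ (C1 / s2) * Real.exp (-(s2 * ξ)) :=
        mul_nonneg (div_nonneg hC1nn hs2pos.le) (Real.exp_pos _).le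
      rw [hχ]; dsimp only; linarith
    have h3 : Real.exp (a * ξ) * U ξ ≤ χ ξ0 := h2.trans h1
    have h4 : U ξ ≤ χ ξ0 / Real.exp (a * ξ) :=
      (le_div_iff₀ (Real.exp_pos _)).mpr (by linarith)
    rw [Real.exp_neg, ← div_eq_mul_inv]; exact h4

/-- decay of the traveling wave when r > 3. -/
theorem stmt_1 (r A : ℝ) (hr : 1 < r) (hA : 0 < A) (hr3 : 3 < r)
    (ν : ℝ) (hν : ν = Real.exp (A ^ (-(1 / (r - 1)))))
    (U : ℝ → ℝ) (hUreg : ContDiff ℝ 2 U)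
    (hUpos : ∀ ξ : ℝ, 0 < U ξ) (hUlt : ∀ ξ : ℝ, U ξ < 1)
    (hODE : ∀ ξ : ℝ, -2 * deriv U ξ =
      deriv (deriv U) ξ + U ξ * (1 - A * Real.log (ν / U ξ) ^ (1 - r)))
    (hlim_bot : Tendsto U atBot (nhds 1))
    (hlim_top : Tendsto U atTop (nhds 0)) :
    ∃ κ > (0:ℝ), Tendsto (fun ξ : ℝ => U ξ / (ξ * Real.exp (-ξ))) atTop (nhds κ) := by
  have hν1 : 1 < ν := by
    rw [hν]; exact Real.one_lt_exp_iff.mpr (Real.rpow_pos_of_pos hA _)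
  have hν0 : (0:ℝ) < ν := lt_trans one_pos hν1
  obtain ⟨hd1, hd2⟩ : Differentiable ℝ U ∧ Differentiable ℝ (deriv U) := by
    have h : ContDiff ℝ (1 + 1) U := by
      rw [show ((1:WithTop ℕ∞) + 1) = 2 from rfl]; exact hUreg
    rw [contDiff_succ_iff_deriv] at h
    exact ⟨h.1, h.2.2.differentiable (by norm_num)⟩
  have hWd : ∀ ξ, HasDerivAt (WW U) (WW1 U ξ) ξ := hasDerivAt_WW U hd1
  have hW1d : ∀ ξ, HasDerivAt (WW1 U) (WW U ξ * PP r A ν U ξ) ξ :=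
    hasDerivAt_WW1 r A ν U hd1 hd2 hODE
  have hW0 : ∀ ξ, 0 < WW U ξ := fun ξ => mul_pos (Real.exp_pos _) (hUpos ξ)
  have hP0 : ∀ ξ, 0 < PP r A ν U ξ := PP_pos r A ν hA hν1 U hUpos hUlt
  have hW1mono : StrictMono (WW1 U) := strictMono_of_deriv_pos fun ξ => by
    rw [(hW1d ξ).deriv]; exact mul_pos (hW0 ξ) (hP0 ξ)
  have hWdiff : Differentiable ℝ (WW U) := fun ξ => (hWd ξ).differentiableAt
  have hW1diff : Differentiable ℝ (WW1 U) := fun ξ => (hW1d ξ).differentiableAt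
  -- W tends to 0 at -infty
  have hWbot : Tendsto (WW U) atBot (nhds 0) := by
    refine tendsto_of_tendsto_of_tendsto_of_le_of_le (g := fun _ => (0:ℝ))
      (h := Real.exp) tendsto_const_nhds Real.tendsto_exp_atBot
      (fun ξ => (hW0 ξ).le) (fun ξ => ?_)
    have : Real.exp ξ * U ξ ≤ Real.exp ξ * 1 :=
      mul_le_mul_of_nonneg_left (hUlt ξ).le (Real.exp_pos ξ).le
    simpa [WW] using this
  -- existence of a point where W' >= 0
  obtain ⟨ξs, hξs⟩ : ∃ ξs : ℝ, 0 ≤ WW1 U ξs := by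
    by_contra hno
    push_neg at hno
    have hanti : StrictAnti (WW U) := strictAnti_of_deriv_neg fun ξ => by
      rw [(hWd ξ).deriv]; exact hno ξ
    obtain ⟨η, hη1, hη2⟩ :=
      ((hWbot.eventually (eventually_lt_nhds (hW0 0))).and (eventually_le_atBot (-1))).exists
    exact absurd (hanti (show η < (0:ℝ) by linarith)) (not_lt.mpr hη1.le)
  -- decay bound
  have hPtend : Tendsto (PP r A ν U) atTop (nhds 0) :=
    PP_tendsto r A ν hr hν1 U hUpos hlim_top
  obtain ⟨ξ0, C2, hC2pos, hdecay⟩ := decay r A ν U hd1 hd2 hUpos hODE hPtend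
  set K : ℝ := A * (aa/2) ^ ((1:ℝ)-r) with hK
  have haa2 : (0:ℝ) < aa / 2 := by have := aa_pos; linarith
  have hKpos : 0 < K := mul_pos hA (Real.rpow_pos_of_pos haa2 _)
  -- lower bound for log(ν/U) and PP ≤ K ξ^(1-r)
  set d : ℝ := Real.log C2 - Real.log ν with hd
  set ξ1 : ℝ := max (max ξ0 1) ((2/aa) * |d|) with hξ1
  have hξ1one : (1:ℝ) ≤ ξ1 := le_trans (le_max_right ξ0 1) (le_max_left _ _)
  have hPK : ∀ ξ ≥ ξ1, PP r A ν U ξ ≤ K * ξ ^ ((1:ℝ)-r) := by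
    intro ξ hξ
    have hξ0' : ξ0 ≤ ξ := le_trans (le_trans (le_max_left ξ0 1) (le_max_left _ _)) hξ
    have hξpos : (0:ℝ) < ξ := lt_of_lt_of_le one_pos (le_trans hξ1one hξ)
    have hUb := hdecay ξ hξ0'
    have hlogU : Real.log (U ξ) ≤ Real.log C2 - aa * ξ := by
      have h1 : Real.log (U ξ) ≤ Real.log (C2 * Real.exp (-(aa * ξ))) :=
        Real.log_le_log (hUpos ξ) hUb
      rwa [Real.log_mul (ne_of_gt hC2pos) (ne_of_gt (Real.exp_pos _)), Real.log_exp,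
        ← sub_eq_add_neg] at h1
    have habs : |d| ≤ (aa/2) * ξ := by
      have h1 : (2/aa) * |d| ≤ ξ := le_trans (le_max_right _ _) hξ
      have h2 : (aa/2) * ((2/aa) * |d|) ≤ (aa/2) * ξ :=
        mul_le_mul_of_nonneg_left h1 haa2.le
      have haa0 : aa ≠ 0 := ne_of_gt aa_pos
      have h3 : (aa/2) * ((2/aa) * |d|) = |d| := by
        field_simp
      linarith
    have hLge : (aa/2) * ξ ≤ Real.log (ν / U ξ) := by
      rw [Real.log_div (ne_of_gt hν0) (ne_of_gt (hUpos ξ))]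
      have h1 : d ≤ |d| := le_abs_self d
      rw [hd] at h1
      linarith
    have h2 : Real.log (ν / U ξ) ^ ((1:ℝ)-r) ≤ ((aa/2) * ξ) ^ ((1:ℝ)-r) :=
      Real.rpow_le_rpow_of_nonpos (mul_pos haa2 hξpos) hLge (by linarith)
    have h3 : ((aa/2) * ξ) ^ ((1:ℝ)-r) = (aa/2) ^ ((1:ℝ)-r) * ξ ^ ((1:ℝ)-r) :=
      Real.mul_rpow haa2.le hξpos.le
    calc PP r A ν U ξ = A * Real.log (ν / U ξ) ^ ((1:ℝ)-r) := rfl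
      _ ≤ A * ((aa/2) * ξ) ^ ((1:ℝ)-r) := mul_le_mul_of_nonneg_left h2 hA.le
      _ = K * ξ ^ ((1:ℝ)-r) := by rw [h3, hK]; ring
  -- choose ξ2
  have htail : Tendsto (fun ξ : ℝ => K * ξ ^ ((3:ℝ)-r) / (r-3)) atTop (nhds 0) := by
    have h1 : Tendsto (fun ξ : ℝ => ξ ^ (-(r-3))) atTop (nhds 0) :=
      tendsto_rpow_neg_atTop (by linarith)
    have h2 := (h1.const_mul K).div_const (r-3)
    simp only [mul_zero, zero_div] at h2
    refine h2.congr fun ξ => ?_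
    rw [show (3:ℝ)-r = -(r-3) by ring]
  obtain ⟨ξ2, ⟨hhalf, hξ2ge⟩, hξ2one⟩ :=
    (((htail.eventually (eventually_le_nhds one_half_pos)).and
      (eventually_ge_atTop (max ξ1 (ξs+1)))).and (eventually_ge_atTop (1:ℝ))).exists
  have hξ2pos : (0:ℝ) < ξ2 := lt_of_lt_of_le one_pos hξ2one
  have hξ2ξ1 : ξ1 ≤ ξ2 := le_trans (le_max_left _ _) hξ2ge
  have hξ2ξs : ξs + 1 ≤ ξ2 := le_trans (le_max_right _ _) hξ2ge
  have hW1nonneg : ∀ ξ ≥ ξ2, 0 ≤ WW1 U ξ := fun ξ hξ =>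
    (lt_of_le_of_lt hξs (hW1mono (show ξs < ξ by linarith))).le
  have hr2 : (0:ℝ) < r - 2 := by linarith
  have hr3' : (0:ℝ) < r - 3 := by linarith
  set M : ℝ := 2*(WW1 U ξ2 + K * WW U ξ2 * (ξ2 ^ ((2:ℝ)-r) / (r-2))) with hM
  have hMbound : ∀ ξ, WW1 U ξ ≤ M := by
    have ht1 : 0 ≤ K * WW U ξ2 * (ξ2 ^ ((2:ℝ)-r) / (r-2)) :=
      mul_nonneg (mul_nonneg hKpos.le (hW0 ξ2).le)
        (div_nonneg (Real.rpow_pos_of_pos hξ2pos _).le hr2.le)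
    have ht2 : 0 ≤ WW1 U ξ2 := hW1nonneg ξ2 le_rfl
    have hM2 : WW1 U ξ2 ≤ M := by rw [hM]; linarith
    intro ξ
    rcases le_or_gt ξ ξ2 with hle | hgt
    · exact le_trans (hW1mono.monotone hle) hM2
    -- main estimate for ξ > ξ2
    have hξpos : 0 < ξ := lt_trans hξ2pos hgt
    have hW1ξnn : 0 ≤ WW1 U ξ := hW1nonneg ξ hgt.le
    have hlin : ∀ s ∈ Set.Icc ξ2 ξ, WW U s ≤ WW U ξ2 + s * WW1 U ξ := by
      have hGd : ∀ s, HasDerivAt (fun s => WW U s - s * WW1 U ξ)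
          (WW1 U s - WW1 U ξ) s := fun s => by
        exact ((hWd s).sub ((hasDerivAt_id s).mul_const (WW1 U ξ))).congr_deriv (by ring)
      have hGanti : AntitoneOn (fun s => WW U s - s * WW1 U ξ) (Set.Icc ξ2 ξ) := by
        refine antitoneOn_of_deriv_nonpos (convex_Icc _ _)
          (fun s _ => (hGd s).differentiableAt.continuousAt.continuousWithinAt)
          (fun s _ => (hGd s).differentiableAt.differentiableWithinAt) ?_
        intro s hs
        rw [interior_Icc] at hs
        rw [(hGd s).deriv]
        have := hW1mono.monotone hs.2.le
        linarith
      intro s hs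
      have h1 : WW U s - s * WW1 U ξ ≤ WW U ξ2 - ξ2 * WW1 U ξ :=
        hGanti (Set.left_mem_Icc.mpr hgt.le) hs hs.1
      have h0 : 0 ≤ ξ2 * WW1 U ξ := mul_nonneg hξ2pos.le hW1ξnn
      linarith
    set F : ℝ → ℝ := fun s => WW1 U s + K * WW U ξ2 * (s ^ ((2:ℝ)-r) / (r-2))
      + (K * WW1 U ξ) * (s ^ ((3:ℝ)-r) / (r-3)) with hF
    have hFd : ∀ s : ℝ, 0 < s → HasDerivAt F
        (WW U s * PP r A ν U s + K * WW U ξ2 * (((2:ℝ)-r) * s ^ ((2:ℝ)-r-1) / (r-2))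
          + (K * WW1 U ξ) * (((3:ℝ)-r) * s ^ ((3:ℝ)-r-1) / (r-3))) s := by
      intro s hs
      have h1 := Real.hasDerivAt_rpow_const (x := s) (p := (2:ℝ)-r) (Or.inl hs.ne')
      have h2 := Real.hasDerivAt_rpow_const (x := s) (p := (3:ℝ)-r) (Or.inl hs.ne')
      exact ((hW1d s).add ((h1.div_const (r-2)).const_mul (K * WW U ξ2))).add
        ((h2.div_const (r-3)).const_mul (K * WW1 U ξ))
    have hFderiv_le : ∀ s ∈ Set.Ioo ξ2 ξ, deriv F s ≤ 0 := by
      intro s hs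
      have hs0 : 0 < s := lt_trans hξ2pos hs.1
      rw [(hFd s hs0).deriv]
      have he1 : s ^ ((2:ℝ)-r-1) = s ^ ((1:ℝ)-r) := by rw [show (2:ℝ)-r-1 = 1-r by ring]
      have he2 : s ^ ((3:ℝ)-r-1) = s ^ ((2:ℝ)-r) := by rw [show (3:ℝ)-r-1 = 2-r by ring]
      rw [he1, he2]
      have hrp : (0:ℝ) < s ^ ((1:ℝ)-r) := Real.rpow_pos_of_pos hs0 _
      have hmul : s ^ ((1:ℝ)-r) * s = s ^ ((2:ℝ)-r) := by
        rw [show (2:ℝ)-r = (1-r)+1 by ring, Real.rpow_add_one hs0.ne']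
      have hb1 : WW U s * PP r A ν U s ≤ WW U s * (K * s ^ ((1:ℝ)-r)) :=
        mul_le_mul_of_nonneg_left (hPK s (by linarith [hs.1])) (hW0 s).le
      have hb2 : WW U s ≤ WW U ξ2 + s * WW1 U ξ := hlin s ⟨hs.1.le, hs.2.le⟩
      have hb3 : WW U s * (K * s ^ ((1:ℝ)-r)) ≤
          (WW U ξ2 + s * WW1 U ξ) * (K * s ^ ((1:ℝ)-r)) :=
        mul_le_mul_of_nonneg_right hb2 (mul_nonneg hKpos.le hrp.le)
      have hexp : (WW U ξ2 + s * WW1 U ξ) * (K * s ^ ((1:ℝ)-r)) =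
          K * WW U ξ2 * s ^ ((1:ℝ)-r) + (K * WW1 U ξ) * s ^ ((2:ℝ)-r) := by
        rw [← hmul]; ring
      have hc1 : K * WW U ξ2 * (((2:ℝ)-r) * s ^ ((1:ℝ)-r) / (r-2)) =
          -(K * WW U ξ2 * s ^ ((1:ℝ)-r)) := by
        field_simp
        ring
      have hc2 : (K * WW1 U ξ) * (((3:ℝ)-r) * s ^ ((2:ℝ)-r) / (r-3)) =
          -((K * WW1 U ξ) * s ^ ((2:ℝ)-r)) := by
        field_simp
        ring
      rw [hc1, hc2]
      linarith [hb1, hb3, hexp.le, hexp.ge]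
    have hFanti : AntitoneOn F (Set.Icc ξ2 ξ) := by
      refine antitoneOn_of_deriv_nonpos (convex_Icc _ _)
        (fun s hs => ((hFd s (lt_of_lt_of_le hξ2pos hs.1)).differentiableAt.continuousAt.continuousWithinAt))
        (fun s hs => ?_) ?_
      · rw [interior_Icc] at hs
        exact (hFd s (lt_trans hξ2pos hs.1)).differentiableAt.differentiableWithinAt
      · intro s hs
        rw [interior_Icc] at hs
        exact hFderiv_le s hs
    have hFle : F ξ ≤ F ξ2 :=
      hFanti (Set.left_mem_Icc.mpr hgt.le) (Set.right_mem_Icc.mpr hgt.le) hgt.le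
    have hpos1 : 0 ≤ K * WW U ξ2 * (ξ ^ ((2:ℝ)-r) / (r-2)) :=
      mul_nonneg (mul_nonneg hKpos.le (hW0 ξ2).le)
        (div_nonneg (Real.rpow_pos_of_pos hξpos _).le hr2.le)
    have hpos2 : 0 ≤ (K * WW1 U ξ) * (ξ ^ ((3:ℝ)-r) / (r-3)) :=
      mul_nonneg (mul_nonneg hKpos.le hW1ξnn)
        (div_nonneg (Real.rpow_pos_of_pos hξpos _).le hr3'.le)
    have hup : WW1 U ξ ≤ F ξ := by rw [hF]; dsimp only; linarith
    have h3rd : (K * WW1 U ξ) * (ξ2 ^ ((3:ℝ)-r) / (r-3)) ≤ (1/2) * WW1 U ξ := by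
      have heq : (K * WW1 U ξ) * (ξ2 ^ ((3:ℝ)-r) / (r-3)) =
          (K * ξ2 ^ ((3:ℝ)-r) / (r-3)) * WW1 U ξ := by ring
      rw [heq]
      exact mul_le_mul_of_nonneg_right hhalf hW1ξnn
    have hFξ2 : F ξ2 ≤ WW1 U ξ2 + K * WW U ξ2 * (ξ2 ^ ((2:ℝ)-r) / (r-2))
        + (1/2) * WW1 U ξ := by
      rw [hF]; dsimp only; linarith
    have hfinal : WW1 U ξ ≤ WW1 U ξ2 + K * WW U ξ2 * (ξ2 ^ ((2:ℝ)-r) / (r-2))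
        + (1/2) * WW1 U ξ := le_trans hup (le_trans hFle hFξ2)
    rw [hM]; linarith
  -- supremum and convergence of W'
  have hbdd : BddAbove (Set.range (WW1 U)) := ⟨M, fun y hy => by
    obtain ⟨ξ, rfl⟩ := hy; exact hMbound ξ⟩
  set κ : ℝ := ⨆ ξ, WW1 U ξ with hκ
  have hκt : Tendsto (WW1 U) atTop (nhds κ) := tendsto_atTop_ciSup hW1mono.monotone hbdd
  have hκub : ∀ ξ, WW1 U ξ ≤ κ := fun ξ => le_ciSup hbdd ξ
  have hκpos : 0 < κ :=
    lt_of_lt_of_le (lt_of_le_of_lt hξs (hW1mono (lt_add_one ξs))) (hκub (ξs+1))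
  refine ⟨κ, hκpos, ?_⟩
  have heq : (fun ξ : ℝ => WW U ξ / ξ) =ᶠ[atTop] (fun ξ : ℝ => U ξ / (ξ * Real.exp (-ξ))) := by
    filter_upwards [eventually_gt_atTop (0:ℝ)] with ξ hξ
    rw [Real.exp_neg]
    simp only [WW]
    rw [eq_comm, div_eq_div_iff (by positivity) (ne_of_gt hξ)]
    · field_simp
  refine Tendsto.congr' heq ?_
  rw [Metric.tendsto_atTop]
  intro ε hε
  obtain ⟨T, hT⟩ := (hκt.eventually (eventually_gt_nhds (show κ - ε/2 < κ by linarith))).exists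
  have hupper : ∀ ξ ≥ T, WW U ξ - κ * ξ ≤ WW U T - κ * T := by
    have hanti : AntitoneOn (fun s => WW U s - κ * s) (Set.Ici T) := by
      refine antitoneOn_of_deriv_nonpos (convex_Ici T)
        (fun s _ => ((hWd s).sub ((hasDerivAt_id s).const_mul κ)).differentiableAt.continuousAt.continuousWithinAt)
        (fun s _ => ((hWd s).sub ((hasDerivAt_id s).const_mul κ)).differentiableAt.differentiableWithinAt)
        ?_
      intro s _
      have hds : HasDerivAt (fun s => WW U s - κ * s) (WW1 U s - κ) s := by
        exact ((hWd s).sub ((hasDerivAt_id s).const_mul κ)).congr_deriv (by ring)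
      rw [hds.deriv]
      linarith [hκub s]
    intro ξ hξ
    exact hanti Set.self_mem_Ici hξ hξ
  have hlower : ∀ ξ ≥ T, WW U T - (κ - ε/2) * T ≤ WW U ξ - (κ - ε/2) * ξ := by
    have hmono : MonotoneOn (fun s => WW U s - (κ - ε/2) * s) (Set.Ici T) := by
      refine monotoneOn_of_deriv_nonneg (convex_Ici T)
        (fun s _ => ((hWd s).sub ((hasDerivAt_id s).const_mul (κ - ε/2))).differentiableAt.continuousAt.continuousWithinAt)
        (fun s _ => ((hWd s).sub ((hasDerivAt_id s).const_mul (κ - ε/2))).differentiableAt.differentiableWithinAt)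
        ?_
      intro s hs
      rw [interior_Ici] at hs
      have hds : HasDerivAt (fun s => WW U s - (κ - ε/2) * s) (WW1 U s - (κ - ε/2)) s := by
        exact ((hWd s).sub ((hasDerivAt_id s).const_mul (κ - ε/2))).congr_deriv (by ring)
      rw [hds.deriv]
      have := hW1mono.monotone hs.le
      linarith
    intro ξ hξ
    exact hmono Set.self_mem_Ici hξ hξ
  set c : ℝ := max |WW U T - κ * T| |WW U T - (κ - ε/2) * T| with hc
  have hcnn : 0 ≤ c := le_trans (abs_nonneg _) (le_max_left _ _)
  refine ⟨max T (max 1 (2*c/ε + 1)), fun ξ hξ => ?_⟩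
  have hξT : T ≤ ξ := le_trans (le_max_left _ _) hξ
  have hξ1' : (1:ℝ) ≤ ξ := le_trans (le_trans (le_max_left _ _) (le_max_right T _)) hξ
  have hξpos : (0:ℝ) < ξ := lt_of_lt_of_le one_pos hξ1'
  have hξc : 2*c/ε + 1 ≤ ξ := le_trans (le_trans (le_max_right _ _) (le_max_right T _)) hξ
  have h2c : 2*c < ε*ξ := by
    have h1 : 2*c/ε < ξ := by linarith
    calc 2*c = (2*c/ε) * ε := by field_simp
    _ < ξ * ε := by exact mul_lt_mul_of_pos_right h1 hε
    _ = ε * ξ := by ring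
  rw [Real.dist_eq, abs_lt]
  have hc1 : -(c) ≤ WW U T - (κ - ε/2) * T := neg_le_of_abs_le (le_max_right _ _)
  have hc2 : WW U T - κ * T ≤ c := le_trans (le_abs_self _) (le_max_left _ _)
  constructor
  · rw [show -ε = (κ - ε) - κ by ring, sub_lt_sub_iff_right, lt_div_iff₀ hξpos]
    have h1 := hlower ξ hξT
    linarith [h1, hc1, h2c]
  · rw [show (ε:ℝ) = (κ + ε) - κ by ring, sub_lt_sub_iff_right, div_lt_iff₀ hξpos]
    have h1 := hupper ξ hξT
    linarith [h1, hc2, h2c, hcnn]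
end

section
/- There exists a constant C > 0 such that for all t ≥ 1 and all x ∈ ℝ: (√t)/(C·(x₊+√t))·exp(−x₊²/(4t) − C·x₊/t) ≤ u(t,x) ≤ (C·√t)/(x₊+√t)·exp(t − x₊²/(4t)). -/
open Real Filter MeasureTheory Set Topology


noncomputable def g0 (s : ℝ) : ℝ := Real.exp (-s^2/4)

noncomputable def EE (z : ℝ) : ℝ := ∫ s in Set.Ioi z, g0 s

lemma g0_pos (s : ℝ) : 0 < g0 s := Real.exp_pos _

lemma g0_eq (s : ℝ) : g0 s = Real.exp (-(1/4) * s^2) := by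
  unfold g0; ring_nf

lemma g0_integrable : Integrable g0 := by
  have := integrable_exp_neg_mul_sq (b := (1/4)) (by norm_num)
  have h : (fun x : ℝ => Real.exp (-(1/4 : ℝ) * x^2)) = g0 := by
    funext s; rw [g0_eq]
  rwa [h] at this

lemma g0_hasDerivAt (s : ℝ) : HasDerivAt g0 (-(s/2) * g0 s) s := by
  have h1 : HasDerivAt (fun y : ℝ => -y^2/4) (-(s/2)) s := by
    have := ((hasDerivAt_pow 2 s).neg).div_const 4
    refine this.congr_deriv (Eq.symm ?_)
    simp; ring
  have h2 := h1.exp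
  have h3 : (fun y : ℝ => Real.exp (-y^2/4)) = g0 := rfl
  rw [h3] at h2
  convert h2 using 1
  show -(s/2) * g0 s = g0 s * (-(s/2))
  ring

lemma sg0_integrable : Integrable (fun s : ℝ => s * g0 s) := by
  have := integrable_mul_exp_neg_mul_sq (b := (1/4)) (by norm_num)
  have h : (fun x : ℝ => x * Real.exp (-(1/4 : ℝ) * x^2)) = (fun s : ℝ => s * g0 s) := by
    funext s; rw [g0_eq]
  rwa [h] at this

lemma g0_cont : Continuous g0 := by
  unfold g0; continuity

lemma g0_anti {a b : ℝ} (ha : 0 ≤ a) (hab : a ≤ b) : g0 b ≤ g0 a := by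
  unfold g0
  apply Real.exp_le_exp.2
  have : a^2 ≤ b^2 := by nlinarith
  linarith

lemma EE_anti : Antitone EE := by
  intro a b hab
  apply setIntegral_mono_set g0_integrable.integrableOn
    (Eventually.of_forall fun s => (g0_pos s).le)
  exact (Ioi_subset_Ioi hab).eventuallyLE

lemma EE_le_tot (z : ℝ) : EE z ≤ ∫ s, g0 s :=
  setIntegral_le_integral g0_integrable (Eventually.of_forall fun s => (g0_pos s).le)

lemma EE_lower {z w : ℝ} (hz : 0 ≤ z) (hw : 0 < w) : w * g0 (z + w) ≤ EE z := by
  have h1 : ∫ s in Set.Ioc z (z+w), g0 (z+w) ≤ ∫ s in Set.Ioc z (z+w), g0 s := by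
    apply setIntegral_mono_on (integrable_const _) (g0_integrable.integrableOn)
      measurableSet_Ioc
    intro s hs
    exact g0_anti (le_trans hz hs.1.le) hs.2
  have h2 : (∫ s in Set.Ioc z (z+w), g0 s) ≤ EE z := by
    apply setIntegral_mono_set g0_integrable.integrableOn
      (Eventually.of_forall fun s => (g0_pos s).le)
    exact Ioc_subset_Ioi_self.eventuallyLE
  calc w * g0 (z+w) = ∫ s in Set.Ioc z (z+w), g0 (z+w) := by
        rw [setIntegral_const, Real.volume_real_Ioc_of_le (by linarith), show z+w-z = w by ring,
          smul_eq_mul]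
    _ ≤ EE z := le_trans h1 h2

lemma EE_pos (z : ℝ) : 0 < EE z :=
  lt_of_lt_of_le (mul_pos one_pos (g0_pos _)) (EE_lower (z := max z 0) (w := 1) (le_max_right _ _) one_pos
    |>.trans (EE_anti (le_max_left z 0)))

lemma EE_hasDerivAt (z : ℝ) : HasDerivAt EE (-(g0 z)) z := by
  have key : ∀ w : ℝ, EE w = EE 0 - ∫ s in (0:ℝ)..w, g0 s := by
    intro w
    have h1 : EE 0 - EE w = ∫ s in (0:ℝ)..w, g0 s := by
      have hIic : ∀ a : ℝ, EE a = (∫ s, g0 s) - ∫ s in Set.Iic a, g0 s := by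
        intro a
        have := integral_add_compl (measurableSet_Iic (a := a)) g0_integrable
        rw [show (Set.Iic a)ᶜ = Set.Ioi a from compl_Iic] at this
        unfold EE; linarith
      rw [hIic 0, hIic w]
      rw [← intervalIntegral.integral_Iic_sub_Iic g0_integrable.integrableOn
        g0_integrable.integrableOn]
      ring
    linarith [h1]
  have hd : HasDerivAt (fun w => EE 0 - ∫ s in (0:ℝ)..w, g0 s) (-(g0 z)) z := by
    have : HasDerivAt (fun w => ∫ s in (0:ℝ)..w, g0 s) (g0 z) z := by
      apply intervalIntegral.integral_hasDerivAt_right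
        (g0_integrable.intervalIntegrable)
        (g0_cont.stronglyMeasurableAtFilter _ _)
        g0_cont.continuousAt
    simpa using (this.const_sub (EE 0))
  exact hd.congr_of_eventuallyEq (Eventually.of_forall key)

lemma EE_cont : Continuous EE := by
  have : Differentiable ℝ EE := fun z => (EE_hasDerivAt z).differentiableAt
  exact this.continuous

-- tail integral of s * g0 s
lemma EE_mul_tail {z : ℝ} (hz : 0 ≤ z) : z * EE z ≤ 2 * g0 z := by
  have hint : ∫ s in Set.Ioi z, s * g0 s = 2 * g0 z := by
    have hder : ∀ s ∈ Set.Ici z, HasDerivAt (fun y => -2 * g0 y) (s * g0 s) s := by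
      intro s _
      have := (g0_hasDerivAt s).const_mul (-2 : ℝ)
      refine this.congr_deriv (Eq.symm ?_)
      ring
    have hi : IntegrableOn (fun s => s * g0 s) (Set.Ioi z) := sg0_integrable.integrableOn
    have htend : Tendsto (fun y => -2 * g0 y) atTop (nhds 0) := by
      have : Tendsto (fun y : ℝ => -y^2/4) atTop atBot := by
        apply Tendsto.atBot_div_const (by norm_num)
        simpa using (tendsto_pow_atTop (n := 2) (by norm_num)).neg
      have := (Real.tendsto_exp_atBot.comp this).const_mul (-2 : ℝ)
      simpa [g0] using this
    have := integral_Ioi_of_hasDerivAt_of_tendsto' hder hi htend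
    rw [this]; simp [mul_comm]
  have hmono : z * EE z ≤ ∫ s in Set.Ioi z, s * g0 s := by
    rw [show z * EE z = ∫ s in Set.Ioi z, z * g0 s by
      unfold EE; rw [integral_const_mul]]
    apply setIntegral_mono_on (g0_integrable.integrableOn.const_mul z)
      sg0_integrable.integrableOn measurableSet_Ioi
    intro s hs
    exact mul_le_mul_of_nonneg_right (le_of_lt hs) (g0_pos s).le
  linarith [hmono, hint.le]

-- upper: (z+1) * EE z ≤ c4 * g0 z for z ≥ 0, c4 = 2 + max (e * EE 0) 1
lemma EE_upper {z : ℝ} (hz : 0 ≤ z) :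
    (z + 1) * EE z ≤ (2 + Real.exp 1 * EE 0 + 1) * g0 z := by
  have h1 : z * EE z ≤ 2 * g0 z := EE_mul_tail hz
  have h2 : EE z ≤ (Real.exp 1 * EE 0 + 1) * g0 z := by
    rcases le_or_gt z 2 with h | h
    · have hg : Real.exp (-1 : ℝ) ≤ g0 z := by
        unfold g0
        apply Real.exp_le_exp.2
        nlinarith
      have : EE z ≤ EE 0 := EE_anti hz
      have he : EE 0 ≤ Real.exp 1 * EE 0 * g0 z := by
        have h3 : 1 ≤ Real.exp 1 * g0 z := by
          calc (1:ℝ) = Real.exp 1 * Real.exp (-1) := by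
                rw [← Real.exp_add]; norm_num
            _ ≤ Real.exp 1 * g0 z := by
                apply mul_le_mul_of_nonneg_left hg (Real.exp_pos 1).le
        nlinarith [EE_pos 0, (EE_pos 0).le]
      nlinarith [g0_pos z, EE_pos 0]
    · have : 2 * EE z ≤ z * EE z := by
        apply mul_le_mul_of_nonneg_right h.le (EE_pos z).le
      have hEz : EE z ≤ g0 z := by linarith
      nlinarith [g0_pos z, Real.exp_pos 1, EE_pos 0, mul_pos (Real.exp_pos 1) (EE_pos 0),
        mul_le_mul_of_nonneg_right (le_of_lt (mul_pos (Real.exp_pos 1) (EE_pos 0))) (g0_pos z).le]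
  nlinarith [g0_pos z]

lemma EE_lower' {z : ℝ} (hz : 0 ≤ z) :
    Real.exp (-3/4 : ℝ) * g0 z / (z + 1) ≤ EE z := by
  have hw : (0:ℝ) < 1/(z+1) := by positivity
  have := EE_lower hz hw
  have hg : Real.exp (-3/4 : ℝ) * g0 z ≤ g0 (z + 1/(z+1)) := by
    unfold g0
    rw [← Real.exp_add]
    apply Real.exp_le_exp.2
    have h1 : (z + 1/(z+1))^2 ≤ z^2 + 3 := by
      have hzw : z * (1/(z+1)) ≤ 1 := by
        rw [mul_one_div, div_le_one (by linarith)]; linarith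
      have hw1 : (1/(z+1)) ≤ 1 := by
        rw [div_le_one (by linarith)]; linarith
      nlinarith
    nlinarith
  rw [div_le_iff₀ (by positivity : (0:ℝ) < z + 1)]
  calc Real.exp (-3/4:ℝ) * g0 z ≤ g0 (z + 1/(z+1)) := hg
    _ = (z+1) * ((1/(z+1)) * g0 (z + 1/(z+1))) := by
        field_simp
    _ ≤ (z+1) * EE z := by
        apply mul_le_mul_of_nonneg_left this (by linarith)
    _ = EE z * (z+1) := mul_comm _ _

lemma EE_tendsto_zero : Tendsto EE atTop (nhds 0) := by
  have h1 : ∀ᶠ z in atTop, EE z ≤ (2 + Real.exp 1 * EE 0 + 1) * g0 z := by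
    filter_upwards [eventually_ge_atTop (0:ℝ), eventually_ge_atTop (1:ℝ)] with z hz hz1
    have := EE_upper hz
    nlinarith [EE_pos z, g0_pos z]
  have h2 : Tendsto (fun z => (2 + Real.exp 1 * EE 0 + 1) * g0 z) atTop (nhds 0) := by
    have : Tendsto g0 atTop (nhds 0) := by
      have : Tendsto (fun y : ℝ => -y^2/4) atTop atBot := by
        apply Tendsto.atBot_div_const (by norm_num)
        simpa using (tendsto_pow_atTop (n := 2) (by norm_num)).neg
      exact Real.tendsto_exp_atBot.comp this
    simpa using this.const_mul _
  apply squeeze_zero' (Eventually.of_forall fun z => (EE_pos z).le) h1 h2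


noncomputable def Phi (t x : ℝ) : ℝ := EE (x / Real.sqrt t)
noncomputable def Phix (t x : ℝ) : ℝ := -(g0 (x / Real.sqrt t)) / Real.sqrt t
noncomputable def Phixx (t x : ℝ) : ℝ := x / (2 * t * Real.sqrt t) * g0 (x / Real.sqrt t)

lemma Phi_hasDerivAt_x {t : ℝ} (ht : 0 < t) (x : ℝ) :
    HasDerivAt (fun y => Phi t y) (Phix t x) x := by
  have hs := Real.sqrt_pos.2 ht
  have h1 : HasDerivAt (fun y : ℝ => y / Real.sqrt t) (1 / Real.sqrt t) x := by
    simpa using (hasDerivAt_id x).div_const (Real.sqrt t)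
  have := (EE_hasDerivAt (x / Real.sqrt t)).comp x h1
  refine this.congr_deriv (Eq.symm ?_)
  unfold Phix
  field_simp

lemma Phix_hasDerivAt_x {t : ℝ} (ht : 0 < t) (x : ℝ) :
    HasDerivAt (fun y => Phix t y) (Phixx t x) x := by
  have hs := Real.sqrt_pos.2 ht
  have h1 : HasDerivAt (fun y : ℝ => y / Real.sqrt t) (1 / Real.sqrt t) x := by
    simpa using (hasDerivAt_id x).div_const (Real.sqrt t)
  have h2 := ((g0_hasDerivAt (x / Real.sqrt t)).comp x h1).neg.div_const (Real.sqrt t)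
  have hts : Real.sqrt t * Real.sqrt t = t := Real.mul_self_sqrt ht.le
  refine h2.congr_deriv (Eq.symm ?_)
  unfold Phixx
  rw [← hts]
  field_simp
  rw [Real.sqrt_sq hs.le]

lemma Phi_hasDerivAt_t {t : ℝ} (ht : 0 < t) (x : ℝ) :
    HasDerivAt (fun s => Phi s x) (Phixx t x) t := by
  have hs := Real.sqrt_pos.2 ht
  have h1 : HasDerivAt (fun s : ℝ => x / Real.sqrt s) (-(x / (2 * t * Real.sqrt t))) t := by
    have hsq : HasDerivAt Real.sqrt (1 / (2 * Real.sqrt t)) t := Real.hasDerivAt_sqrt ht.ne'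
    have h2 := (hasDerivAt_const t x).div hsq hs.ne'
    have hts : Real.sqrt t * Real.sqrt t = t := Real.mul_self_sqrt ht.le
    refine h2.congr_deriv (Eq.symm ?_)
    rw [Real.sq_sqrt ht.le, ← hts]
    field_simp
    ring
  have := (EE_hasDerivAt (x / Real.sqrt t)).comp t h1
  refine this.congr_deriv (Eq.symm ?_)
  unfold Phixx
  ring

lemma Phi_contOn : ContinuousOn (fun p : ℝ × ℝ => Phi p.1 p.2) (Set.Ioi 0 ×ˢ (Set.univ : Set ℝ)) := by
  apply EE_cont.comp_continuousOn
  apply ContinuousOn.div continuousOn_snd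
  · exact (Real.continuous_sqrt.comp continuous_fst).continuousOn
  · intro p hp
    exact (Real.sqrt_pos.2 (hp.1 : (0:ℝ) < p.1)).ne'

-- derivative ≤ 0 at a left-endpoint-avoiding minimum approached from the left
lemma deriv_nonpos_of_left_min {G : ℝ → ℝ} {d a s : ℝ} (hG : HasDerivAt G d s)
    (has : a < s) (hmin : ∀ τ ∈ Set.Icc a s, G s ≤ G τ) : d ≤ 0 := by
  by_contra hd
  push_neg at hd
  have hslope := hasDerivAt_iff_tendsto_slope.1 hG
  have h1 : ∀ᶠ τ in 𝓝[<] s, 0 < slope G s τ := by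
    have : ∀ᶠ τ in 𝓝[≠] s, slope G s τ ∈ Set.Ioi 0 :=
      hslope.eventually (eventually_mem_set.2 (Ioi_mem_nhds hd))
    exact nhdsWithin_mono s (fun τ hτ => ne_of_lt hτ) this
  have h2 : ∀ᶠ τ in 𝓝[<] s, a < τ := eventually_nhdsWithin_of_eventually_nhds
    (eventually_gt_nhds has)
  have h3 : ∀ᶠ τ in 𝓝[<] s, τ < s := eventually_mem_nhdsWithin
  rcases ((h1.and h2).and h3).exists with ⟨τ, ⟨hτpos, hτa⟩, hτs⟩
  rw [slope_def_field] at hτpos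
  rw [div_pos_iff] at hτpos
  rcases hτpos with ⟨h, h'⟩ | ⟨h, h'⟩
  · linarith
  · have := hmin τ ⟨hτa.le, hτs.le⟩
    linarith

lemma second_deriv_nonneg_of_isLocalMin {F F' : ℝ → ℝ} {D y : ℝ}
    (hF : ∀ x, HasDerivAt F (F' x) x) (hF' : HasDerivAt F' D y)
    (hmin : IsLocalMin F y) : 0 ≤ D := by
  by_contra hD
  push_neg at hD
  have hF'y : F' y = 0 := hmin.hasDerivAt_eq_zero (hF y)
  have hslope := hasDerivAt_iff_tendsto_slope.1 hF'
  have h1 : ∀ᶠ x in 𝓝[>] y, F' x < 0 := by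
    have : ∀ᶠ x in 𝓝[≠] y, slope F' y x ∈ Set.Iio 0 :=
      hslope.eventually (eventually_mem_set.2 (Iio_mem_nhds hD))
    have h2 : ∀ᶠ x in 𝓝[>] y, slope F' y x < 0 :=
      nhdsWithin_mono y (fun x hx => ne_of_gt hx) this
    have h3 : ∀ᶠ x in 𝓝[>] y, y < x := eventually_mem_nhdsWithin
    filter_upwards [h2, h3] with x hx hyx
    rw [slope_def_field, hF'y, sub_zero, div_neg_iff] at hx
    rcases hx with ⟨_, h⟩ | ⟨h, _⟩
    · linarith
    · linarith [h, hyx]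
  rcases (nhdsGT_basis y).eventually_iff.1 h1 with ⟨c, hc, hcsub⟩
  have hanti : StrictAntiOn F (Set.Icc y c) := by
    apply strictAntiOn_of_deriv_neg (convex_Icc y c)
    · exact fun x _ => ((hF x).differentiableAt).continuousAt.continuousWithinAt
    · intro x hx
      rw [interior_Icc] at hx
      rw [(hF x).deriv]
      exact hcsub hx
  have h4 : ∀ᶠ x in 𝓝[>] y, F y ≤ F x := (hmin.filter_mono nhdsWithin_le_nhds)
  have h5 : ∀ᶠ x in 𝓝[>] y, x < c := eventually_nhdsWithin_of_eventually_nhds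
    (eventually_lt_nhds hc)
  have h6 : ∀ᶠ x in 𝓝[>] y, y < x := eventually_mem_nhdsWithin
  rcases (h4.and (h5.and h6)).exists with ⟨x, hge, hxc, hyx⟩
  have := hanti ⟨le_refl y, hc.le⟩ ⟨hyx.le, hxc.le⟩ hyx
  linarith



lemma max_principle (v vt vx vxx : ℝ → ℝ → ℝ) (B : ℝ)
    (hvc : ContinuousOn (fun p : ℝ × ℝ => v p.1 p.2) (Set.Ioi 0 ×ˢ Set.univ))
    (hv_t : ∀ t > (0:ℝ), ∀ x, HasDerivAt (fun s => v s x) (vt t x) t)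
    (hv_x : ∀ t > (0:ℝ), ∀ x, HasDerivAt (fun y => v t y) (vx t x) x)
    (hv_xx : ∀ t > (0:ℝ), ∀ x, HasDerivAt (fun y => vx t y) (vxx t x) x)
    (hsuper : ∀ t > (0:ℝ), ∀ x, vxx t x ≤ vt t x)
    (hbdd : ∀ t > (0:ℝ), ∀ x, -B ≤ v t x)
    (hbot : ∀ ε > (0:ℝ), ∀ R > (0:ℝ), ∃ σ > (0:ℝ), ∀ t, 0 < t → t ≤ σ →
      ∀ x ∈ Set.Icc (-R) R, -ε ≤ v t x) :
    ∀ t > (0:ℝ), ∀ x, 0 ≤ v t x := by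
  intro t₀ ht₀ x₀
  by_contra hneg
  push_neg at hneg
  have hg₀pos : (0:ℝ) < Real.exp (2*t₀) * Real.cosh x₀ :=
    mul_pos (Real.exp_pos _) (Real.cosh_pos x₀)
  set ε : ℝ := -v t₀ x₀ / (2 * (Real.exp (2*t₀) * Real.cosh x₀)) with hε
  have hεpos : 0 < ε := by
    apply div_pos (by linarith) (by linarith)
  have hεg : ε * (Real.exp (2*t₀) * Real.cosh x₀) = -v t₀ x₀ / 2 := by
    rw [hε]; field_simp
  -- choose R
  set R : ℝ := max (|x₀|+1) (2*(B+1)/ε + 2) with hR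
  have hRx : |x₀| < R := lt_of_lt_of_le (by linarith [abs_nonneg x₀]) (le_max_left _ _)
  have hRpos : 0 < R := lt_of_le_of_lt (abs_nonneg x₀) hRx
  have hcoshR : (B+1)/ε < Real.cosh R := by
    have h1 : (R+1)/2 ≤ Real.cosh R := by
      rw [Real.cosh_eq]
      have := Real.add_one_le_exp R
      have h2 : 0 < Real.exp (-R) := Real.exp_pos _
      linarith
    have h3 : 2*(B+1)/ε + 2 ≤ R := le_max_right _ _
    have h4 : (B+1)/ε < (R+1)/2 := by
      rw [lt_div_iff₀ (by norm_num : (0:ℝ) < 2)]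
      have e : 2*(B+1)/ε = (B+1)/ε * 2 := by ring
      linarith
    linarith
  have hεcoshR : B + 1 ≤ ε * Real.cosh R := by
    rw [div_lt_iff₀ hεpos] at hcoshR
    linarith [hcoshR]
  -- bottom time
  obtain ⟨σ, hσpos, hσ⟩ := hbot ε hεpos R hRpos
  set a : ℝ := min σ (t₀/2) with ha
  have hapos : 0 < a := lt_min hσpos (by linarith)
  have hat₀ : a < t₀ := lt_of_le_of_lt (min_le_right _ _) (by linarith)
  -- compact min
  set Q : Set (ℝ × ℝ) := Set.Icc a t₀ ×ˢ Set.Icc (-R) R with hQ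
  have hQcomp : IsCompact Q := (isCompact_Icc).prod (isCompact_Icc)
  set F : ℝ × ℝ → ℝ := fun p => v p.1 p.2 + ε * (Real.exp (2*p.1) * Real.cosh p.2) with hF
  have hQsub : Q ⊆ Set.Ioi 0 ×ˢ (Set.univ : Set ℝ) := by
    rintro ⟨t, x⟩ ⟨ht, _⟩
    exact ⟨lt_of_lt_of_le hapos ht.1, trivial⟩
  have hFcont : ContinuousOn F Q := by
    apply ContinuousOn.add (hvc.mono hQsub)
    apply Continuous.continuousOn
    exact continuous_const.mul ((Real.continuous_exp.comp (continuous_const.mul continuous_fst)).mul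
      (Real.continuous_cosh.comp continuous_snd))
  have hQne : (t₀, x₀) ∈ Q := by
    constructor
    · exact ⟨hat₀.le, le_refl _⟩
    · simpa using abs_le.1 hRx.le
  obtain ⟨q, hqQ, hqmin⟩ := hQcomp.exists_isMinOn ⟨_, hQne⟩ hFcont
  obtain ⟨s, y⟩ := q
  have hspos : 0 < s := lt_of_lt_of_le hapos hqQ.1.1
  have hsy : F (s, y) ≤ F (t₀, x₀) := hqmin hQne
  have hFneg : F (s, y) < 0 := by
    have : F (t₀, x₀) = v t₀ x₀ / 2 := by
      rw [hF]; simp only; rw [hεg]; ring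
    rw [this] at hsy
    exact lt_of_le_of_lt hsy (by linarith)
  have hys : Real.cosh y ≥ 1 := Real.one_le_cosh y

  have hexp1 : (1:ℝ) ≤ Real.exp (2*s) := Real.one_le_exp (by linarith)
  -- y is interior
  have hyR : |y| < R := by
    rcases lt_or_ge (|y|) R with h | h
    · exact h
    · exfalso
      have h1 : R ≤ |y| := h
      have h2 : Real.cosh R ≤ Real.cosh y := by
        rw [← Real.cosh_abs y]
        exact Real.cosh_le_cosh.2 (by rw [abs_abs, abs_of_pos hRpos]; exact h1)
      have h3 : -B ≤ v s y := hbdd s hspos y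
      have h4 : ε * Real.cosh R ≤ ε * (Real.exp (2*s) * Real.cosh y) := by
        have : Real.cosh R ≤ Real.exp (2*s) * Real.cosh y := by nlinarith
        exact mul_le_mul_of_nonneg_left this hεpos.le
      have : F (s, y) ≥ -B + (B+1) := by
        have : F (s,y) = v s y + ε * (Real.exp (2*s) * Real.cosh y) := rfl
        rw [this]
        have := le_trans hεcoshR h4
        linarith
      linarith
  -- s is not at bottom
  have hsa : a < s := by
    rcases lt_or_ge a s with h | h
    · exact h
    · exfalso
      have hsa' : s = a := le_antisymm (le_of_not_gt (fun h' => absurd h (not_le.2 h'))) hqQ.1.1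
      have hbot' : -ε ≤ v s y := by
        apply hσ s hspos _ y ⟨by linarith [abs_le.1 hyR.le |>.1], by linarith [abs_le.1 hyR.le |>.2]⟩
        rw [hsa']; exact min_le_left _ _
      have : F (s, y) ≥ -ε + ε * 1 := by
        have h5 : ε * 1 ≤ ε * (Real.exp (2*s) * Real.cosh y) := by
          apply mul_le_mul_of_nonneg_left _ hεpos.le
          nlinarith
        have : F (s,y) = v s y + ε * (Real.exp (2*s) * Real.cosh y) := rfl
        rw [this]; linarith
      linarith
  -- spatial second derivative at min
  have hyIcc : y ∈ Set.Icc (-R) R := hqQ.2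
  have hyIoo' : y ∈ Set.Ioo (-R) R := by
    rcases abs_lt.1 hyR with ⟨h1, h2⟩; exact ⟨h1, h2⟩
  have hlocmin : IsLocalMin (fun x => v s x + (ε * Real.exp (2*s)) * Real.cosh x) y := by
    have hmem : Set.Icc (-R) R ∈ 𝓝 y := Icc_mem_nhds hyIoo'.1 hyIoo'.2
    apply Filter.eventually_of_mem hmem
    intro x hx
    have h1 : F (s, y) ≤ F (s, x) := hqmin ⟨⟨hqQ.1.1, hqQ.1.2⟩, hx⟩
    have e1 : F (s, x) = v s x + (ε * Real.exp (2*s)) * Real.cosh x := by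
      show v s x + ε * (Real.exp (2*s) * Real.cosh x) = _; ring
    have e2 : F (s, y) = v s y + (ε * Real.exp (2*s)) * Real.cosh y := by
      show v s y + ε * (Real.exp (2*s) * Real.cosh y) = _; ring
    rw [e1, e2] at h1
    exact h1
  have hsecond : 0 ≤ vxx s y + (ε * Real.exp (2*s)) * Real.cosh y := by
    apply second_deriv_nonneg_of_isLocalMin
      (F' := fun x => vx s x + (ε * Real.exp (2*s)) * Real.sinh x)
      (fun x => (hv_x s hspos x).add ((Real.hasDerivAt_cosh x).const_mul _))
      (((hv_xx s hspos y).add ((Real.hasDerivAt_sinh y).const_mul _)))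
      hlocmin
  -- time derivative at min
  have htime : vt s y + (ε * Real.cosh y) * (Real.exp (2*s) * 2) ≤ 0 := by
    apply deriv_nonpos_of_left_min (G := fun τ => v τ y + (ε * Real.cosh y) * Real.exp (2*τ))
      (a := a) _ hsa
    · intro τ hτ
      have h1 : F (s, y) ≤ F (τ, y) := hqmin ⟨⟨hτ.1, le_trans hτ.2 hqQ.1.2⟩, hyIcc⟩
      have e1 : ∀ τ', F (τ', y) = v τ' y + (ε * Real.cosh y) * Real.exp (2*τ') := by
        intro τ'; show v τ' y + ε * (Real.exp (2*τ') * Real.cosh y) = _; ring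
      rw [e1, e1] at h1
      exact h1
    · exact (hv_t s hspos y).add
        ((((hasDerivAt_id s).const_mul (2:ℝ)).exp.const_mul (ε * Real.cosh y)).congr_deriv
          (by simp))
  have hcontr : vxx s y ≤ vt s y := hsuper s hspos y
  nlinarith [mul_pos (mul_pos hεpos (Real.exp_pos (2*s))) (Real.cosh_pos y),
    mul_pos (mul_pos hεpos (Real.cosh_pos y)) (Real.exp_pos (2*s))]



set_option maxHeartbeats 1000000 in
lemma final_bounds (u : ℝ → ℝ → ℝ)
    (hrange : ∀ t ≥ (0:ℝ), ∀ x : ℝ, u t x ∈ Set.Icc (0:ℝ) 1)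
    (A B₀ M₁ : ℝ) (hApos : 0 < A) (hB₀pos : 0 < B₀) (hM₁one : (1:ℝ) ≤ M₁)
    (hupper : ∀ t > (0:ℝ), ∀ x, Real.exp (-t) * u t x ≤ A * Phi t x)
    (hlower : ∀ t > (0:ℝ), ∀ x, B₀ * Phi t (x + M₁) ≤ u t x) :
    ∃ C > (0:ℝ), ∀ t ≥ (1:ℝ), ∀ x : ℝ,
      Real.sqrt t / (C * (max x 0 + Real.sqrt t))
          * Real.exp (-(max x 0) ^ 2 / (4 * t) - C * max x 0 / t) ≤ u t x ∧
      u t x ≤ C * Real.sqrt t / (max x 0 + Real.sqrt t)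
          * Real.exp (t - (max x 0) ^ 2 / (4 * t)) := by
  have hM₁pos : (0:ℝ) < M₁ := by linarith
  obtain ⟨c₄, hc₄⟩ : ∃ y : ℝ, y = 2 + Real.exp 1 * EE 0 + 1 := ⟨_, rfl⟩
  have hc₄pos : 0 < c₄ := by
    have := mul_pos (Real.exp_pos 1) (EE_pos 0)
    rw [hc₄]; linarith
  obtain ⟨c₀, hc₀⟩ : ∃ y : ℝ, y = B₀ * EE M₁ := ⟨_, rfl⟩
  have hc₀pos : 0 < c₀ := by rw [hc₀]; exact mul_pos hB₀pos (EE_pos M₁)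
  obtain ⟨c₅, hc₅⟩ : ∃ y : ℝ, y = B₀ * Real.exp (-3/4 : ℝ) * Real.exp (-M₁^2/4) / (1 + M₁) :=
    ⟨_, rfl⟩
  have hc₅pos : 0 < c₅ := by
    rw [hc₅]
    apply div_pos _ (by linarith)
    exact mul_pos (mul_pos hB₀pos (Real.exp_pos _)) (Real.exp_pos _)
  obtain ⟨C, hCdef⟩ :
      ∃ y : ℝ, y = max (max 1 (A * c₄)) (max (max (1/c₀) (1/c₅)) (M₁/2)) := ⟨_, rfl⟩
  have hC1 : 1 ≤ C := by
    rw [hCdef]; exact le_trans (le_max_left 1 (A*c₄)) (le_max_left _ _)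
  have hCpos : 0 < C := lt_of_lt_of_le one_pos hC1
  have hCA : A * c₄ ≤ C := by
    rw [hCdef]; exact le_trans (le_max_right 1 (A*c₄)) (le_max_left _ _)
  have hCc₀ : 1/c₀ ≤ C := by
    rw [hCdef]
    exact le_trans (le_trans (le_max_left (1/c₀) (1/c₅)) (le_max_left _ _)) (le_max_right _ _)
  have hCc₅ : 1/c₅ ≤ C := by
    rw [hCdef]
    exact le_trans (le_trans (le_max_right (1/c₀) (1/c₅)) (le_max_left _ _)) (le_max_right _ _)
  have hCM : M₁/2 ≤ C := by
    rw [hCdef]; exact le_trans (le_max_right _ _) (le_max_right _ _)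
  refine ⟨C, hCpos, ?_⟩
  intro t ht x
  have ht0 : 0 < t := lt_of_lt_of_le one_pos ht
  have hsq : 0 < Real.sqrt t := Real.sqrt_pos.2 ht0
  have hsq1 : 1 ≤ Real.sqrt t := by
    rw [show (1:ℝ) = Real.sqrt 1 by simp]
    exact Real.sqrt_le_sqrt ht
  have hsqsq : Real.sqrt t ^ 2 = t := Real.sq_sqrt ht0.le
  constructor
  · -- LOWER BOUND
    rcases le_or_gt x 0 with hx0 | hx0
    · rw [max_eq_right hx0]
      have e1 : Real.sqrt t / (C * (0 + Real.sqrt t)) * Real.exp (-(0:ℝ)^2/(4*t) - C*0/t)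
          = 1/C := by
        rw [zero_add, show -(0:ℝ)^2/(4*t) - C*0/t = 0 by ring, Real.exp_zero, mul_one]
        rw [div_eq_div_iff (by positivity) (by positivity)]
        ring
      rw [e1]
      have h1 : (x + M₁)/Real.sqrt t ≤ M₁ := by
        have h2 : (x + M₁)/Real.sqrt t ≤ M₁/Real.sqrt t := by
          gcongr
          linarith
        have h3 : M₁/Real.sqrt t ≤ M₁ := by
          rw [div_le_iff₀ hsq]
          have := mul_le_mul_of_nonneg_left hsq1 hM₁pos.le
          rw [mul_one] at this
          exact this
        linarith
      have h4 : c₀ ≤ u t x := by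
        have h6 := hlower t ht0 x
        unfold Phi at h6
        have h5 : EE M₁ ≤ EE ((x+M₁)/Real.sqrt t) := EE_anti h1
        calc c₀ = B₀ * EE M₁ := hc₀
          _ ≤ B₀ * EE ((x+M₁)/Real.sqrt t) := mul_le_mul_of_nonneg_left h5 hB₀pos.le
          _ ≤ u t x := h6
      have h6 : 1/C ≤ c₀ := by
        rw [div_le_iff₀ hCpos]
        calc (1:ℝ) = c₀ * (1/c₀) := by field_simp
          _ ≤ c₀ * C := mul_le_mul_of_nonneg_left hCc₀ hc₀pos.le
      linarith
    · rw [max_eq_left hx0.le]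
      set z' : ℝ := (x + M₁)/Real.sqrt t with hz'
      have hz'nn : 0 ≤ z' := div_nonneg (by linarith) hsq.le
      have hul : B₀ * (Real.exp (-3/4:ℝ) * g0 z' / (z' + 1)) ≤ u t x := by
        have h1 := hlower t ht0 x
        unfold Phi at h1
        exact le_trans (mul_le_mul_of_nonneg_left (EE_lower' hz'nn) hB₀pos.le) h1
      have hz'sq : z'^2 = (x+M₁)^2/t := by
        rw [hz', div_pow, hsqsq]
      have hg0z' : g0 z' = Real.exp (-x^2/(4*t) - M₁*x/(2*t)) * Real.exp (-M₁^2/(4*t)) := by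
        unfold g0
        rw [← Real.exp_add]
        congr 1
        rw [hz'sq]
        field_simp
        ring
      have hz'1 : z' + 1 = (x + M₁ + Real.sqrt t)/Real.sqrt t := by
        rw [hz']
        field_simp
      have hxs : 0 < x + Real.sqrt t := by linarith
      have hxMs : 0 < x + M₁ + Real.sqrt t := by linarith
      have hiv : x + M₁ + Real.sqrt t ≤ (1 + M₁) * (x + Real.sqrt t) := by
        have h1 := mul_nonneg hM₁pos.le (show (0:ℝ) ≤ x + Real.sqrt t - 1 by linarith)
        have h2 : (1+M₁)*(x+Real.sqrt t) = x + Real.sqrt t + M₁*(x+Real.sqrt t - 1) + M₁ := by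
          ring
        linarith
      have hi : Real.exp (-x^2/(4*t) - C*x/t) ≤ Real.exp (-x^2/(4*t) - M₁*x/(2*t)) := by
        apply Real.exp_le_exp.2
        have h1 : M₁/2 * x ≤ C * x := mul_le_mul_of_nonneg_right hCM hx0.le
        have h2 : M₁*x/(2*t) ≤ C*x/t := by
          rw [show M₁*x/(2*t) = (M₁/2*x)/t by ring]
          gcongr
        linarith
      have h1M : 1 + M₁ ≤ C * (B₀ * Real.exp (-3/4:ℝ) * Real.exp (-M₁^2/4)) := by
        have h1 : 1 ≤ C * c₅ := by
          rw [← div_le_iff₀ hc₅pos]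
          rw [div_eq_mul_inv, one_mul] at hCc₅ ⊢
          exact hCc₅
        have h2 : C * c₅ * (1+M₁) = C * (B₀ * Real.exp (-3/4:ℝ) * Real.exp (-M₁^2/4)) := by
          rw [hc₅]
          field_simp
        have h3 := mul_le_mul_of_nonneg_right h1 (show (0:ℝ) ≤ 1+M₁ by linarith)
        rw [one_mul] at h3
        linarith
      have key : Real.sqrt t / (C * (x + Real.sqrt t)) * Real.exp (-x^2/(4*t) - C*x/t)
          ≤ B₀ * (Real.exp (-3/4:ℝ) * g0 z' / (z' + 1)) := by
        rw [hg0z', hz'1, div_mul_eq_mul_div, div_div_eq_mul_div, ← mul_div_assoc]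
        rw [div_le_div_iff₀ (by positivity) hxMs]
        have hq1 : Real.sqrt t * Real.exp (-x^2/(4*t) - C*x/t) * (x + M₁ + Real.sqrt t)
            ≤ Real.sqrt t * Real.exp (-x^2/(4*t) - M₁*x/(2*t)) * ((1 + M₁) * (x + Real.sqrt t)) := by
          apply mul_le_mul (mul_le_mul_of_nonneg_left hi hsq.le) hiv hxMs.le (by positivity)
        have hq2 : Real.sqrt t * Real.exp (-x^2/(4*t) - M₁*x/(2*t)) * ((1 + M₁) * (x + Real.sqrt t))
            ≤ Real.sqrt t * Real.exp (-x^2/(4*t) - M₁*x/(2*t)) *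
              ((C * (B₀ * Real.exp (-3/4:ℝ) * Real.exp (-M₁^2/4))) * (x + Real.sqrt t)) := by
          apply mul_le_mul_of_nonneg_left _ (by positivity)
          exact mul_le_mul_of_nonneg_right h1M hxs.le
        have hq3 : Real.sqrt t * Real.exp (-x^2/(4*t) - M₁*x/(2*t)) *
              ((C * (B₀ * Real.exp (-3/4:ℝ) * Real.exp (-M₁^2/4))) * (x + Real.sqrt t))
            ≤ Real.sqrt t * Real.exp (-x^2/(4*t) - M₁*x/(2*t)) *
              ((C * (B₀ * Real.exp (-3/4:ℝ) * Real.exp (-M₁^2/(4*t)))) * (x + Real.sqrt t)) := by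
          have hbb : Real.exp (-M₁^2/4) ≤ Real.exp (-M₁^2/(4*t)) := by
            apply Real.exp_le_exp.2
            have h3 : M₁^2/(4*t) ≤ M₁^2/4 := by
              apply div_le_div_of_nonneg_left (sq_nonneg M₁) (by norm_num) (by linarith)
            rw [neg_div, neg_div]
            exact neg_le_neg h3
          gcongr
        calc Real.sqrt t * Real.exp (-x^2/(4*t) - C*x/t) * (x + M₁ + Real.sqrt t)
            ≤ _ := le_trans hq1 (le_trans hq2 hq3)
          _ = B₀ * (Real.exp (-3/4:ℝ) *
                (Real.exp (-x^2/(4*t) - M₁*x/(2*t)) * Real.exp (-M₁^2/(4*t))) * Real.sqrt t) *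
              (C * (x + Real.sqrt t)) := by ring
      exact le_trans key hul
  · -- UPPER BOUND
    rcases le_or_gt x 0 with hx0 | hx0
    · rw [max_eq_right hx0]
      have e1 : C * Real.sqrt t/(0+Real.sqrt t) * Real.exp (t - (0:ℝ)^2/(4*t))
          = C * Real.exp t := by
        rw [zero_add, show t - (0:ℝ)^2/(4*t) = t by ring, mul_div_assoc,
          div_self hsq.ne', mul_one]
      rw [e1]
      have h1 : u t x ≤ 1 := (hrange t ht0.le x).2
      have h2 : (1:ℝ) ≤ C * Real.exp t := by
        have h3 := mul_le_mul_of_nonneg_left (Real.one_le_exp (show (0:ℝ) ≤ t by linarith))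
          hCpos.le
        rw [mul_one] at h3
        linarith
      linarith
    · rw [max_eq_left hx0.le]
      set z : ℝ := x/Real.sqrt t with hz
      have hznn : 0 ≤ z := div_nonneg hx0.le hsq.le
      have hue : u t x ≤ A * Real.exp t * EE z := by
        have h := hupper t ht0 x
        unfold Phi at h
        have e2 : u t x = Real.exp t * (Real.exp (-t) * u t x) := by
          rw [← mul_assoc, ← Real.exp_add]
          simp
        rw [e2]
        calc Real.exp t * (Real.exp (-t) * u t x) ≤ Real.exp t * (A * EE z) :=
            mul_le_mul_of_nonneg_left h (Real.exp_pos t).le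
          _ = A * Real.exp t * EE z := by ring
      have hEEu : EE z ≤ c₄ * g0 z / (z+1) := by
        rw [le_div_iff₀ (by linarith : (0:ℝ) < z+1)]
        have := EE_upper hznn
        rw [← hc₄] at this
        linarith [mul_comm (EE z) (z+1)]
      have hzsq : z^2 = x^2/t := by
        rw [hz, div_pow, hsqsq]
      have hg0z : g0 z = Real.exp (-x^2/(4*t)) := by
        unfold g0
        congr 1
        rw [hzsq]
        ring
      have hz1 : z + 1 = (x + Real.sqrt t)/Real.sqrt t := by
        rw [hz]
        field_simp
      have hxs : 0 < x + Real.sqrt t := by linarith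
      have hfinal : A * Real.exp t * (c₄ * g0 z/(z+1))
          ≤ C * Real.sqrt t/(x+Real.sqrt t) * Real.exp (t - x^2/(4*t)) := by
        rw [hg0z, hz1, show t - x^2/(4*t) = t + (-x^2/(4*t)) by ring, Real.exp_add,
          div_div_eq_mul_div]
        calc A * Real.exp t * (c₄ * Real.exp (-x^2/(4*t)) * Real.sqrt t/(x+Real.sqrt t))
            = (A*c₄) * (Real.exp t * Real.exp (-x^2/(4*t)) * Real.sqrt t/(x+Real.sqrt t)) := by
              ring
          _ ≤ C * (Real.exp t * Real.exp (-x^2/(4*t)) * Real.sqrt t/(x+Real.sqrt t)) := by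
              apply mul_le_mul_of_nonneg_right hCA
              positivity
          _ = C * Real.sqrt t/(x+Real.sqrt t) * (Real.exp t * Real.exp (-x^2/(4*t))) := by
              ring
      calc u t x ≤ A * Real.exp t * EE z := hue
        _ ≤ A * Real.exp t * (c₄ * g0 z/(z+1)) := by
            apply mul_le_mul_of_nonneg_left hEEu
            positivity
        _ ≤ _ := hfinal



set_option maxHeartbeats 1000000 in
/-- weak small-time heat-kernel-type bounds on solutions of
reaction-diffusion equations with 0 ≤ f(u) ≤ u and localized initial data. -/
theorem stmt_8 (f : ℝ → ℝ) (hf : ∀ s ∈ Set.Icc (0:ℝ) 1, 0 ≤ f s ∧ f s ≤ s)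
    (u : ℝ → ℝ → ℝ)
    (hcont : ContinuousOn (fun p : ℝ × ℝ => u p.1 p.2) (Set.Ici 0 ×ˢ Set.univ))
    (hrange : ∀ t ≥ (0:ℝ), ∀ x : ℝ, u t x ∈ Set.Icc (0:ℝ) 1)
    (hreg_t : ∀ x : ℝ, ContDiffOn ℝ 1 (fun t => u t x) (Set.Ioi 0))
    (hreg_x : ∀ t > (0:ℝ), ContDiff ℝ 2 (fun x => u t x))
    (hpde : ∀ t > (0:ℝ), ∀ x : ℝ, deriv (fun s => u s x) t =
      deriv (deriv (fun y => u t y)) x + f (u t x))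
    (hinit0 : ∀ x ≥ (0:ℝ), u 0 x = 0)
    (hinit_inf : 0 < Filter.liminf (fun x : ℝ => u 0 x) Filter.atBot) :
    ∃ C > (0:ℝ), ∀ t ≥ (1:ℝ), ∀ x : ℝ,
      Real.sqrt t / (C * (max x 0 + Real.sqrt t))
          * Real.exp (-(max x 0) ^ 2 / (4 * t) - C * max x 0 / t) ≤ u t x ∧
      u t x ≤ C * Real.sqrt t / (max x 0 + Real.sqrt t)
          * Real.exp (t - (max x 0) ^ 2 / (4 * t)) := by
  -- Step 0 : initial data lower bound
  obtain ⟨δ, hδpos, M, hMnn, hM⟩ :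
      ∃ δ > (0:ℝ), ∃ M ≥ (0:ℝ), ∀ x ≤ -M, δ ≤ u 0 x := by
    set L := Filter.liminf (fun x : ℝ => u 0 x) Filter.atBot with hL
    have hbd : Filter.IsBoundedUnder (· ≥ ·) Filter.atBot (fun x : ℝ => u 0 x) :=
      Filter.isBoundedUnder_of ⟨0, fun x => (hrange 0 le_rfl x).1⟩
    have hev : ∀ᶠ x in Filter.atBot, L/2 < u 0 x :=
      Filter.eventually_lt_of_lt_liminf (by linarith) hbd
    rcases Filter.eventually_atBot.1 hev with ⟨M₀, hM₀⟩
    refine ⟨L/2, by linarith, max (-M₀) 0, le_max_right _ _, fun x hx => ?_⟩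
    have : x ≤ M₀ := by
      have h1 : -(max (-M₀) 0) ≤ M₀ := by
        have := le_max_left (-M₀) 0
        linarith
      linarith
    exact (hM₀ x this).le
  -- derivatives of u
  have hu_t : ∀ t > (0:ℝ), ∀ x, HasDerivAt (fun s => u s x) (deriv (fun s => u s x) t) t := by
    intro t ht x
    have h1 : DifferentiableOn ℝ (fun s => u s x) (Set.Ioi 0) :=
      (hreg_t x).differentiableOn one_ne_zero
    exact ((h1 t ht).differentiableAt (Ioi_mem_nhds ht)).hasDerivAt
  have hu_x : ∀ t > (0:ℝ), ∀ x, HasDerivAt (fun y => u t y) (deriv (fun y => u t y) x) x := by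
    intro t ht x
    exact (((hreg_x t ht).differentiable (by norm_num)) x).hasDerivAt
  have hu_xx : ∀ t > (0:ℝ), ∀ x,
      HasDerivAt (fun y => deriv (fun y' => u t y') y) (deriv (deriv (fun y => u t y)) x) x := by
    intro t ht x
    have h : ContDiff ℝ 2 (fun x => u t x) := hreg_x t ht
    rw [show (2 : WithTop ℕ∞) = 1 + 1 by norm_num] at h
    have h3 : Differentiable ℝ (deriv (fun y => u t y)) :=
      ((contDiff_succ_iff_deriv.mp h).2.2).differentiable one_ne_zero
    exact (h3 x).hasDerivAt
  -- uniform continuity tool near t = 0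
  have hnear0 : ∀ ε > (0:ℝ), ∀ R > (0:ℝ), ∃ σ > (0:ℝ), σ ≤ 1 ∧ ∀ t, 0 < t → t ≤ σ →
      ∀ x ∈ Set.Icc (-(R+1)) (R+1), |u t x - u 0 x| ≤ ε := by
    intro ε hε R hR
    set K : Set (ℝ × ℝ) := Set.Icc (0:ℝ) 1 ×ˢ Set.Icc (-(R+1)) (R+1) with hK
    have hKcomp : IsCompact K := isCompact_Icc.prod isCompact_Icc
    have hKsub : K ⊆ Set.Ici 0 ×ˢ Set.univ := by
      rintro ⟨t, x⟩ ⟨ht, _⟩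
      exact ⟨ht.1, trivial⟩
    have hucK : UniformContinuousOn (fun p : ℝ × ℝ => u p.1 p.2) K :=
      hKcomp.uniformContinuousOn_of_continuous (hcont.mono hKsub)
    rw [Metric.uniformContinuousOn_iff] at hucK
    obtain ⟨δ₀, hδ₀, hδ'⟩ := hucK ε hε
    refine ⟨min (δ₀/2) 1, lt_min (by linarith) one_pos, min_le_right _ _, ?_⟩
    intro t ht htσ x hx
    have ht1 : t ≤ 1 := le_trans htσ (min_le_right _ _)
    have h1 : ((t, x) : ℝ × ℝ) ∈ K := ⟨⟨ht.le, ht1⟩, hx⟩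
    have h2 : ((0, x) : ℝ × ℝ) ∈ K := ⟨⟨le_rfl, zero_le_one⟩, hx⟩
    have hdist : dist ((t,x) : ℝ × ℝ) ((0,x) : ℝ × ℝ) < δ₀ := by
      rw [Prod.dist_eq]
      simp only [dist_self]
      rw [Real.dist_eq, sub_zero, abs_of_pos ht]
      have : t ≤ δ₀/2 := le_trans htσ (min_le_left _ _)
      calc max t 0 = t := max_eq_left ht.le
        _ < δ₀ := by linarith
    have := hδ' _ h1 _ h2 hdist
    rw [Real.dist_eq] at this
    exact this.le
  -- upper comparison
  obtain ⟨A, hA⟩ : ∃ y : ℝ, y = (EE 0)⁻¹ := ⟨_, rfl⟩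
  have hApos : 0 < A := by rw [hA]; exact inv_pos.2 (EE_pos 0)
  have hexp_le_one : ∀ t : ℝ, 0 < t → Real.exp (-t) ≤ 1 := fun t ht =>
    Real.exp_le_one_iff.2 (by linarith)
  have hupper : ∀ t > (0:ℝ), ∀ x, Real.exp (-t) * u t x ≤ A * Phi t x := by
    have key := max_principle
      (fun t x => A * Phi t x - Real.exp (-t) * u t x)
      (fun t x => A * Phixx t x -
        (Real.exp (-t) * deriv (fun s => u s x) t - Real.exp (-t) * u t x))
      (fun t x => A * Phix t x - Real.exp (-t) * deriv (fun y => u t y) x)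
      (fun t x => A * Phixx t x - Real.exp (-t) * deriv (deriv (fun y => u t y)) x)
      1
      (by -- continuity
        apply ContinuousOn.sub (continuousOn_const.mul Phi_contOn)
        apply ContinuousOn.mul
        · exact ((Real.continuous_exp.comp continuous_fst.neg)).continuousOn
        · exact hcont.mono (Set.prod_mono Set.Ioi_subset_Ici_self subset_rfl))
      (by -- time derivative
        intro t ht x
        have h1 := (Phi_hasDerivAt_t ht x).const_mul A
        have h2 : HasDerivAt (fun s : ℝ => Real.exp (-s)) (Real.exp (-t) * (-1)) t :=
          ((hasDerivAt_id t).neg).exp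
        have h3 := h2.mul (hu_t t ht x)
        have h4 := h1.sub h3
        refine h4.congr_deriv (Eq.symm ?_)
        ring)
      (by -- x derivative
        intro t ht x
        exact ((Phi_hasDerivAt_x ht x).const_mul A).sub ((hu_x t ht x).const_mul _))
      (by -- second x derivative
        intro t ht x
        exact ((Phix_hasDerivAt_x ht x).const_mul A).sub ((hu_xx t ht x).const_mul _))
      (by -- supersolution
        intro t ht x
        have hp := hpde t ht x
        have hfu := (hf (u t x) (hrange t ht.le x)).2
        have he := Real.exp_pos (-t)
        nlinarith [hp, hfu, he]
        )
      (by -- bounded below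
        intro t ht x
        have h1 : 0 ≤ A * Phi t x :=
          mul_nonneg hApos.le (EE_pos _).le
        have h2 : Real.exp (-t) * u t x ≤ 1 := by
          have := hrange t ht.le x
          nlinarith [hexp_le_one t ht, Real.exp_pos (-t), this.1, this.2]
        linarith)
      (by -- bottom
        intro ε hε R hR
        obtain ⟨σ, hσpos, hσ1, hσ⟩ := hnear0 ε hε R hR
        refine ⟨σ, hσpos, ?_⟩
        intro t ht htσ x hx
        have hxR : x ∈ Set.Icc (-(R+1)) (R+1) := ⟨by linarith [hx.1], by linarith [hx.2]⟩
        rcases le_or_gt x 0 with hx0 | hx0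
        · have hz : x / Real.sqrt t ≤ 0 :=
            div_nonpos_iff.2 (Or.inr ⟨hx0, (Real.sqrt_nonneg t)⟩)
          have h1 : EE 0 ≤ Phi t x := EE_anti hz
          have h2 : 1 ≤ A * Phi t x := by
            rw [hA]
            rw [inv_mul_eq_div, le_div_iff₀ (EE_pos 0)]
            linarith
          have h3 : Real.exp (-t) * u t x ≤ 1 := by
            have := hrange t ht.le x
            nlinarith [hexp_le_one t ht, Real.exp_pos (-t), this.1, this.2]
          linarith
        · have hu0 : u 0 x = 0 := hinit0 x hx0.le
          have h4 := hσ t ht htσ x hxR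
          rw [hu0, sub_zero] at h4
          have h5 : u t x ≤ ε := (abs_le.1 h4).2
          have h6 : Real.exp (-t) * u t x ≤ u t x := by
            nlinarith [hexp_le_one t ht, (hrange t ht.le x).1, Real.exp_pos (-t)]
          have h7 : 0 ≤ A * Phi t x := mul_nonneg hApos.le (EE_pos _).le
          linarith)
    intro t ht x
    have := key t ht x
    linarith
  -- lower comparison
  obtain ⟨Etot, hEtot⟩ : ∃ y : ℝ, y = ∫ s, g0 s := ⟨_, rfl⟩
  have hEtotpos : 0 < Etot := by
    rw [hEtot]; exact lt_of_lt_of_le (EE_pos 0) (EE_le_tot 0)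
  obtain ⟨M₁, hM₁⟩ : ∃ y : ℝ, y = M + 1 := ⟨_, rfl⟩
  have hM₁pos : (0:ℝ) < M₁ := by rw [hM₁]; linarith
  have hM₁one : (1:ℝ) ≤ M₁ := by rw [hM₁]; linarith
  obtain ⟨B₀, hB₀⟩ : ∃ y : ℝ, y = δ / (2 * Etot) := ⟨_, rfl⟩
  have hB₀pos : 0 < B₀ := by rw [hB₀]; exact div_pos hδpos (by linarith)
  have hB₀Phi : ∀ z, B₀ * EE z ≤ δ/2 := by
    intro z
    rw [hB₀]
    rw [div_mul_eq_mul_div, div_le_iff₀ (by linarith : (0:ℝ) < 2*Etot)]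
    have h6 := EE_le_tot z
    rw [← hEtot] at h6
    have h0 := (EE_pos z).le
    nlinarith
  have hlower : ∀ t > (0:ℝ), ∀ x, B₀ * Phi t (x + M₁) ≤ u t x := by
    have key := max_principle
      (fun t x => u t x - B₀ * Phi t (x + M₁))
      (fun t x => deriv (fun s => u s x) t - B₀ * Phixx t (x + M₁))
      (fun t x => deriv (fun y => u t y) x - B₀ * Phix t (x + M₁))
      (fun t x => deriv (deriv (fun y => u t y)) x - B₀ * Phixx t (x + M₁))
      (δ/2)
      (by -- continuity
        apply ContinuousOn.sub
        · exact hcont.mono (Set.prod_mono Set.Ioi_subset_Ici_self subset_rfl)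
        apply ContinuousOn.mul continuousOn_const
        have hmapsto : Set.MapsTo (fun p : ℝ × ℝ => (p.1, p.2 + M₁))
            (Set.Ioi 0 ×ˢ Set.univ) (Set.Ioi 0 ×ˢ Set.univ) := by
          intro p hp
          exact ⟨hp.1, trivial⟩
        have hcomp := Phi_contOn.comp
          (f := fun p : ℝ × ℝ => (p.1, p.2 + M₁))
          ((continuous_fst.prodMk (continuous_snd.add continuous_const)).continuousOn)
          hmapsto
        exact hcomp)
      (by -- time derivative
        intro t ht x
        exact (hu_t t ht x).sub ((Phi_hasDerivAt_t ht (x + M₁)).const_mul B₀))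
      (by -- x derivative
        intro t ht x
        have h1 := (Phi_hasDerivAt_x ht (x + M₁)).comp x ((hasDerivAt_id x).add_const M₁)
        have h2 := (hu_x t ht x).sub (h1.const_mul B₀)
        refine h2.congr_deriv (Eq.symm ?_)
        simp)
      (by -- second x derivative
        intro t ht x
        have h1 := (Phix_hasDerivAt_x ht (x + M₁)).comp x ((hasDerivAt_id x).add_const M₁)
        have h2 := (hu_xx t ht x).sub (h1.const_mul B₀)
        refine h2.congr_deriv (Eq.symm ?_)
        simp)
      (by -- supersolution
        intro t ht x
        have hp := hpde t ht x
        have hfu := (hf (u t x) (hrange t ht.le x)).1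
        linarith)
      (by -- bounded below
        intro t ht x
        have h1 : B₀ * Phi t (x + M₁) ≤ δ/2 := hB₀Phi _
        have h2 : 0 ≤ u t x := (hrange t ht.le x).1
        linarith)
      (by -- bottom
        intro ε hε R hR
        -- tail smallness
        have hε' : 0 < ε / B₀ := div_pos hε hB₀pos
        have htail : ∀ᶠ z in atTop, EE z < ε / B₀ := by
          have := EE_tendsto_zero
          exact this.eventually_lt_const hε'
        obtain ⟨z₀, hz₀⟩ := (htail.and (eventually_ge_atTop 1)).exists_forall_of_atTop
        set z₁ : ℝ := z₀ with hz₁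
        obtain ⟨hz₀small, hz₀one⟩ := hz₀ z₀ le_rfl
        have hz₀pos : (0:ℝ) < z₀ := by linarith
        set σ₁ : ℝ := (z₀^2)⁻¹ with hσ₁
        have hσ₁pos : 0 < σ₁ := by positivity
        have hsqrtσ₁ : Real.sqrt σ₁ = z₀⁻¹ := by
          rw [hσ₁, Real.sqrt_inv, Real.sqrt_sq hz₀pos.le]
        obtain ⟨σ₂, hσ₂pos, hσ₂1, hσ₂⟩ := hnear0 (δ/2) (by linarith) R hR
        refine ⟨min σ₁ σ₂, lt_min hσ₁pos hσ₂pos, ?_⟩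
        intro t ht htσ x hx
        have htσ₁ : t ≤ σ₁ := le_trans htσ (min_le_left _ _)
        have htσ₂ : t ≤ σ₂ := le_trans htσ (min_le_right _ _)
        have hsq : 0 < Real.sqrt t := Real.sqrt_pos.2 ht
        rcases le_or_gt x (-M) with hxM | hxM
        · -- region where the initial data is at least δ
          have h1 : δ ≤ u 0 x := hM x hxM
          have h2 := hσ₂ t ht htσ₂ x ⟨by linarith [hx.1], by linarith [hx.2]⟩
          have h3 : δ/2 ≤ u t x := by
            have := (abs_le.1 h2).1
            linarith
          have h4 : B₀ * Phi t (x + M₁) ≤ δ/2 := hB₀Phi _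
          linarith
        · -- region where the barrier is tiny
          have hxM₁ : 1 ≤ x + M₁ := by rw [hM₁]; linarith
          have hsqle : Real.sqrt t ≤ z₀⁻¹ := by
            rw [← hsqrtσ₁]
            exact Real.sqrt_le_sqrt htσ₁
          have h5 : z₀ ≤ 1 / Real.sqrt t := by
            rw [le_div_iff₀ hsq]
            calc z₀ * Real.sqrt t ≤ z₀ * z₀⁻¹ :=
              mul_le_mul_of_nonneg_left hsqle hz₀pos.le
              _ = 1 := mul_inv_cancel₀ hz₀pos.ne'
          have h6 : z₀ ≤ (x + M₁) / Real.sqrt t := by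
            calc z₀ ≤ 1 / Real.sqrt t := h5
              _ ≤ (x + M₁) / Real.sqrt t := by gcongr
          have h7 : EE ((x + M₁) / Real.sqrt t) ≤ EE z₀ := EE_anti h6
          have h8 : B₀ * Phi t (x + M₁) ≤ ε := by
            unfold Phi
            calc B₀ * EE ((x + M₁) / Real.sqrt t) ≤ B₀ * EE z₀ :=
                mul_le_mul_of_nonneg_left h7 hB₀pos.le
              _ ≤ B₀ * (ε / B₀) := mul_le_mul_of_nonneg_left hz₀small.le hB₀pos.le
              _ = ε := by field_simp
          have h9 : 0 ≤ u t x := (hrange t ht.le x).1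
          linarith)
    intro t ht x
    have := key t ht x
    linarith
  exact final_bounds u hrange A B₀ M₁ hApos hB₀pos hM₁one hupper hlower
end

section
/- The function Q satisfies Q″(y) = V(y)·Q(y) for all y > 0. Moreover, there exists λ > 0, depending only on A, such that for every continuously differentiable function ψ : (0,∞) → ℝ with compact support contained in (0,∞) satisfying ∫₀^∞ ψ(y)·Q(y) dy = 0, one has ∫₀^∞ (ψ′(y)² + V(y)·ψ(y)²) dy ≥ λ·∫₀^∞ ψ(y)² dy. -/
open Real Filter MeasureTheory

set_option maxHeartbeats 1000000

/-- Transfer an integral over `Ioi 0` of a function vanishing outside `Ioc c d`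
to an interval integral. -/
lemma stmt12_L1 (f : ℝ → ℝ) {c d : ℝ} (hc : 0 < c) (hcd : c ≤ d)
    (h0 : ∀ y ∈ Set.Ioi (0:ℝ) \ Set.Ioc c d, f y = 0) :
    ∫ y in Set.Ioi (0:ℝ), f y = ∫ y in c..d, f y := by
  rw [intervalIntegral.integral_of_le hcd]
  exact MeasureTheory.setIntegral_eq_of_subset_of_forall_diff_eq_zero measurableSet_Ioi
    (fun y hy => hc.trans hy.1) h0

/-- Q is a zero mode of the operator −∂_y² + V, and the operator
has a spectral gap on the orthogonal complement of Q. -/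
theorem stmt_12 (A α : ℝ) (hA : 0 < A) (hα : 1 < α) (hαA : α * (α - 1) = A)
    (V : ℝ → ℝ) (hV : ∀ y : ℝ, V y = y ^ 2 / 16 + 1 / 4 + A / y ^ 2 - (1 + α) / 2)
    (Z : ℝ) (hZ : 0 < Z)
    (Q : ℝ → ℝ) (hQ : ∀ y : ℝ, Q y = Z⁻¹ * y ^ α * Real.exp (-y ^ 2 / 8))
    (hnorm : ∫ y in Set.Ioi (0:ℝ), (Q y) ^ 2 = 1) :
    (∀ y > (0:ℝ), deriv (deriv Q) y = V y * Q y) ∧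
    ∃ lam > (0:ℝ), ∀ ψ : ℝ → ℝ, ContDiff ℝ 1 ψ → HasCompactSupport ψ →
      tsupport ψ ⊆ Set.Ioi 0 →
      (∫ y in Set.Ioi (0:ℝ), ψ y * Q y) = 0 →
      lam * ∫ y in Set.Ioi (0:ℝ), (ψ y) ^ 2 ≤
        ∫ y in Set.Ioi (0:ℝ), ((deriv ψ y) ^ 2 + V y * (ψ y) ^ 2) := by
  have hα0 : 0 < α := lt_trans one_pos hα
  -- the logarithmic derivative coefficient
  set w : ℝ → ℝ := fun y => α / y - y / 4 with hw
  -- Q has derivative w y * Q y for y > 0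
  have hQd : ∀ y ∈ Set.Ioi (0:ℝ), HasDerivAt Q (w y * Q y) y := by
    intro y hy
    have hy0 : (0:ℝ) < y := hy
    have h1 : HasDerivAt (fun t : ℝ => t ^ α) (α * y ^ (α - 1)) y :=
      Real.hasDerivAt_rpow_const (Or.inl hy0.ne')
    have h2 : HasDerivAt (fun t : ℝ => Real.exp (-t ^ 2 / 8)) (Real.exp (-y ^ 2 / 8) * (-(2 * y) / 8)) y := by
      have hin : HasDerivAt (fun t : ℝ => -t ^ 2 / 8) (-(2 * y) / 8) y := by
        have := (hasDerivAt_pow 2 y).neg.div_const 8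
        simpa using this
      simpa [mul_comm] using hin.exp
    have h3 : HasDerivAt (fun t : ℝ => Z⁻¹ * t ^ α * Real.exp (-t ^ 2 / 8))
        (Z⁻¹ * (α * y ^ (α - 1)) * Real.exp (-y ^ 2 / 8)
          + Z⁻¹ * y ^ α * (Real.exp (-y ^ 2 / 8) * (-(2 * y) / 8))) y := by
      exact (h1.const_mul Z⁻¹).mul h2
    have hQe : Q = fun t : ℝ => Z⁻¹ * t ^ α * Real.exp (-t ^ 2 / 8) := funext hQ
    rw [hQe]
    convert h3 using 1
    have hsub : y ^ (α - 1) = y ^ α / y := by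
      rw [Real.rpow_sub hy0, Real.rpow_one]
    simp only [hw, hsub]
    field_simp
    ring
  have hQpos : ∀ y ∈ Set.Ioi (0:ℝ), 0 < Q y := by
    intro y hy
    rw [hQ]
    have : (0:ℝ) < y ^ α := Real.rpow_pos_of_pos hy α
    positivity
  -- first conjunct
  have part1 : ∀ y > (0:ℝ), deriv (deriv Q) y = V y * Q y := by
    intro y hy
    have hy0 : (0:ℝ) < y := hy
    have hmem : Set.Ioi (0:ℝ) ∈ nhds y := isOpen_Ioi.mem_nhds hy
    have e1 : deriv Q =ᶠ[nhds y] fun t => w t * Q t :=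
      Filter.eventually_of_mem hmem (fun t ht => (hQd t ht).deriv)
    rw [e1.deriv_eq]
    have h3 : HasDerivAt w (-α / y ^ 2 - 1 / 4) y := by
      have ha : HasDerivAt (fun t : ℝ => α / t) (α * -(y ^ 2)⁻¹) y := by
        simpa [div_eq_mul_inv] using (hasDerivAt_inv hy0.ne').const_mul α
      have hb : HasDerivAt (fun t : ℝ => t / 4) (1 / 4) y := by
        simpa using (hasDerivAt_id y).div_const 4
      have := ha.sub hb
      refine this.congr_deriv ?_
      ring
    have h4 := (h3.mul (hQd y hy)).deriv
    rw [show (fun t => w t * Q t) = w * Q from rfl, h4, hV, ← hαA, hw]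
    field_simp
    ring
  -- derivative of w
  have hwd : ∀ y ∈ Set.Ioi (0:ℝ), HasDerivAt w (-α / y ^ 2 - 1 / 4) y := by
    intro y hy
    have hy0 : (0:ℝ) < y := hy
    have ha : HasDerivAt (fun t : ℝ => α / t) (α * -(y ^ 2)⁻¹) y := by
      simpa [div_eq_mul_inv] using (hasDerivAt_inv hy0.ne').const_mul α
    have hb : HasDerivAt (fun t : ℝ => t / 4) (1 / 4) y := by
      simpa using (hasDerivAt_id y).div_const 4
    have := ha.sub hb
    refine this.congr_deriv ?_
    ring
  have hQcont : Continuous Q := by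
    rw [funext hQ]
    refine Continuous.mul (Continuous.mul continuous_const ?_) ?_
    · exact continuous_iff_continuousAt.mpr
        (fun y => Real.continuousAt_rpow_const y α (Or.inr hα0.le))
    · exact Real.continuous_exp.comp (by continuity)
  have hQcOn : ContinuousOn Q (Set.Ioi 0) := hQcont.continuousOn
  have hwcOn : ContinuousOn w (Set.Ioi 0) := by
    rw [hw]
    exact (continuousOn_const.div continuousOn_id
      (fun y hy => ne_of_gt hy)).sub (continuous_id.continuousOn.div_const 4)
  have hQne : ∀ y ∈ Set.Ioi (0:ℝ), Q y ≠ 0 := fun y hy => (hQpos y hy).ne'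
  refine ⟨part1, ⟨1/2, one_half_pos, ?_⟩⟩
  intro ψ hψ hψsupp hψsub hψorth
  have hψc : Continuous ψ := hψ.continuous
  have hψ'c : Continuous (deriv ψ) := hψ.continuous_deriv le_rfl
  have hψd : ∀ y : ℝ, HasDerivAt ψ (deriv ψ y) y :=
    fun y => (hψ.differentiable one_ne_zero y).hasDerivAt
  -- choose compact support bounds
  set K : Set ℝ := tsupport ψ ∪ Set.Icc 1 2 with hKdef
  have hKc : IsCompact K := hψsupp.union isCompact_Icc
  have hKsub : K ⊆ Set.Ioi 0 := by
    refine Set.union_subset hψsub (fun y hy => ?_)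
    exact lt_of_lt_of_le one_pos hy.1
  have hKne : K.Nonempty := ⟨1, Or.inr ⟨le_rfl, one_le_two⟩⟩
  set a := sInf K with hadef
  set b := sSup K with hbdef
  have haK : a ∈ K := hKc.sInf_mem hKne
  have ha : 0 < a := hKsub haK
  have hKab : K ⊆ Set.Icc a b :=
    fun y hy => ⟨csInf_le hKc.bddBelow hy, le_csSup hKc.bddAbove hy⟩
  have hab : a ≤ b := by
    have h2 : (1:ℝ) ∈ K := Or.inr ⟨le_rfl, one_le_two⟩
    exact le_trans (hKab h2).1 (hKab h2).2
  set c := a/2 with hcdef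
  set d := b+1 with hddef
  have hc : 0 < c := by positivity
  have hca : c < a := by rw [hcdef]; linarith
  have hbd : b < d := by rw [hddef]; linarith
  have hcd : c ≤ d := by linarith
  have hIccsub : Set.Icc a b ⊆ Set.Ioc c d :=
    fun y hy => ⟨lt_of_lt_of_le hca hy.1, le_trans hy.2 hbd.le⟩
  have hψ0 : ∀ y, y ∉ Set.Icc a b → ψ y = 0 := by
    intro y hy
    by_contra h
    exact hy (hKab (Or.inl (subset_tsupport ψ h)))
  have hψ'0 : ∀ y, y ∉ Set.Icc a b → deriv ψ y = 0 := by
    intro y hy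
    by_contra h
    exact hy (hKab (Or.inl (support_deriv_subset h)))
  have hout : ∀ y, y ∈ Set.Ioi (0:ℝ) \ Set.Ioc c d → y ∉ Set.Icc a b :=
    fun y hy hmem => hy.2 (hIccsub hmem)
  have hψcd : ψ c = 0 := hψ0 c (fun hmem => absurd hmem.1 (not_le.mpr hca))
  have hψdd : ψ d = 0 := hψ0 d (fun hmem => absurd hmem.2 (not_le.mpr hbd))
  -- the antiderivative of ψ Q
  have hψQc : Continuous (fun t => ψ t * Q t) := hψc.mul hQcont
  set F : ℝ → ℝ := fun y => ∫ t in c..y, ψ t * Q t with hFdef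
  have hFd : ∀ y : ℝ, HasDerivAt F (ψ y * Q y) y := by
    intro y
    exact intervalIntegral.integral_hasDerivAt_right (hψQc.intervalIntegrable c y)
      (hψQc.stronglyMeasurableAtFilter volume (nhds y)) hψQc.continuousAt
  have hFc : Continuous F := continuous_iff_continuousAt.mpr (fun y => (hFd y).continuousAt)
  have hFcd : F c = 0 := intervalIntegral.integral_same
  have hFdd : F d = 0 := by
    have h1 : ∫ t in c..d, ψ t * Q t = ∫ y in Set.Ioi (0:ℝ), ψ y * Q y := by
      refine (stmt12_L1 (fun t => ψ t * Q t) hc hcd (fun y hy => ?_)).symm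
      show ψ y * Q y = 0
      rw [hψ0 y (hout y hy), zero_mul]
    show (∫ t in c..d, ψ t * Q t) = 0
    rw [h1, hψorth]
  have hF0 : ∀ y, y ∈ Set.Ioi (0:ℝ) \ Set.Ioc c d → F y = 0 := by
    intro y hy
    rcases not_and_or.mp (Set.mem_Ioc.not.mp hy.2) with h | h
    · -- y ≤ c
      have hyc : y ≤ c := le_of_not_gt h
      show (∫ t in c..y, ψ t * Q t) = 0
      rw [show (∫ t in c..y, ψ t * Q t) = ∫ t in c..y, (0:ℝ) from
        intervalIntegral.integral_congr (fun t ht => ?_)]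
      · simp
      · show ψ t * Q t = 0
        have htc : t ≤ c := by
          rcases Set.mem_uIcc.mp ht with h' | h'
          · exact le_trans h'.2 hyc
          · exact h'.2
        rw [hψ0 t (fun hmem => absurd (le_trans hmem.1 htc) (not_le.mpr hca)), zero_mul]
    · -- d < y is impossible-free: d ≤ y case
      have hdy : d ≤ y := le_of_not_gt (fun hcon => h (le_of_lt hcon))
      have hsplit : F y = F d + ∫ t in d..y, ψ t * Q t := by
        exact (intervalIntegral.integral_add_adjacent_intervals
          (hψQc.intervalIntegrable c d) (hψQc.intervalIntegrable d y)).symm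
      rw [hsplit, hFdd, zero_add]
      rw [show (∫ t in d..y, ψ t * Q t) = ∫ t in d..y, (0:ℝ) from
        intervalIntegral.integral_congr (fun t ht => ?_)]
      · simp
      · show ψ t * Q t = 0
        have htd : d ≤ t := by
          rcases Set.mem_uIcc.mp ht with h' | h'
          · exact h'.1
          · exact le_trans hdy h'.1
        rw [hψ0 t (fun hmem => absurd (lt_of_lt_of_le hbd htd)
            (not_lt.mpr hmem.2)), zero_mul]
  -- notation
  set u : ℝ → ℝ := fun y => deriv ψ y - w y * ψ y with hu
  set D : ℝ → ℝ := fun y => u y / Q y with hD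
  have hsubIcc : Set.uIcc c d ⊆ Set.Ioi 0 := by
    rw [Set.uIcc_of_le hcd]
    exact fun y hy => lt_of_lt_of_le hc hy.1
  have II : ∀ f : ℝ → ℝ, ContinuousOn f (Set.Ioi 0) → IntervalIntegrable f volume c d :=
    fun f hf => (hf.mono hsubIcc).intervalIntegrable
  have hucOn : ContinuousOn u (Set.Ioi 0) :=
    hψ'c.continuousOn.sub (hwcOn.mul hψc.continuousOn)
  have hFcOn : ContinuousOn F (Set.Ioi 0) := hFc.continuousOn
  have hQ2ne : ∀ y ∈ Set.Ioi (0:ℝ), Q y ^ 2 ≠ 0 := fun y hy => pow_ne_zero 2 (hQne y hy)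
  -- derivatives of the three boundary terms
  have hG1d : ∀ y ∈ Set.Ioi (0:ℝ), HasDerivAt (fun t => w t * ψ t ^ 2)
      ((-α / y ^ 2 - 1 / 4) * ψ y ^ 2 + w y * (2 * ψ y * deriv ψ y)) y := by
    intro y hy
    have h := (hwd y hy).mul ((hψd y).pow 2)
    refine h.congr_deriv ?_
    simp only [Pi.pow_apply]; push_cast
    ring
  have hφd : ∀ y ∈ Set.Ioi (0:ℝ), HasDerivAt (fun t => ψ t / Q t) (D y) y := by
    intro y hy
    have h := (hψd y).div (hQd y hy) (hQne y hy)
    have hQy : Q y ≠ 0 := hQne y hy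
    refine h.congr_deriv ?_
    simp only [hD, hu]
    field_simp
  have hG2d : ∀ y ∈ Set.Ioi (0:ℝ), HasDerivAt (fun t => ψ t / Q t * F t)
      (D y * F y + ψ y / Q y * (ψ y * Q y)) y :=
    fun y hy => (hφd y hy).mul (hFd y)
  set g3 : ℝ → ℝ := fun y =>
    ((2 * (-α / y ^ 2 - 1 / 4) * F y ^ 2 + 4 * w y * F y * (ψ y * Q y)) * Q y ^ 2
      - 2 * w y * F y ^ 2 * (2 * Q y * (w y * Q y))) / (Q y ^ 2) ^ 2 with hg3
  have hG3d : ∀ y ∈ Set.Ioi (0:ℝ),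
      HasDerivAt (fun t => 2 * w t * F t ^ 2 / Q t ^ 2) (g3 y) y := by
    intro y hy
    have hN : HasDerivAt (fun t => 2 * w t * F t ^ 2)
        (2 * (-α / y ^ 2 - 1 / 4) * F y ^ 2 + 4 * w y * F y * (ψ y * Q y)) y := by
      have h := ((hwd y hy).const_mul 2).mul ((hFd y).pow 2)
      refine h.congr_deriv ?_
      simp only [Pi.pow_apply]; push_cast
      ring
    have hQ2 : HasDerivAt (fun t => Q t ^ 2) (2 * Q y * (w y * Q y)) y := by
      have h := (hQd y hy).pow 2
      refine h.congr_deriv ?_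
      push_cast
      ring
    exact hN.div hQ2 (hQ2ne y hy)
  -- pointwise identities
  set g1 : ℝ → ℝ := fun y => (-α / y ^ 2 - 1 / 4) * ψ y ^ 2 + w y * (2 * ψ y * deriv ψ y)
    with hg1
  have hIA : Set.EqOn (fun y => deriv ψ y ^ 2 + V y * ψ y ^ 2)
      (fun y => u y ^ 2 + g1 y) (Set.uIcc c d) := by
    intro y hy
    have hy0 : (0:ℝ) < y := hsubIcc hy
    have hyne : y ≠ 0 := hy0.ne'
    have hVy : V y = y ^ 2 / 16 + 1 / 4 + α * (α - 1) / y ^ 2 - (1 + α) / 2 := by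
      rw [hV, hαA]
    simp only [hu, hg1, hw]
    rw [hVy]
    field_simp
    ring
  have hIB : Set.EqOn (fun y => ψ y ^ 2)
      (fun y => (D y * F y + ψ y / Q y * (ψ y * Q y)) - D y * F y) (Set.uIcc c d) := by
    intro y hy
    have hQy : Q y ≠ 0 := hQne y (hsubIcc hy)
    simp only [hD, hu]
    field_simp
    ring
  have hIC : Set.EqOn (fun y => ψ y ^ 2)
      (fun y => (Q y ^ 2 * (ψ y / Q y - 2 * w y * F y / Q y ^ 2) ^ 2
        + (2 * α / y ^ 2 + 1 / 2) * (F y ^ 2 / Q y ^ 2)) + g3 y) (Set.uIcc c d) := by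
    intro y hy
    have hy0 : (0:ℝ) < y := hsubIcc hy
    have hyne : y ≠ 0 := hy0.ne'
    have hQy : Q y ≠ 0 := hQne y (hsubIcc hy)
    simp only [hg3, hw]
    field_simp
    ring
  -- continuity of all integrands on `Ioi 0`
  have hDcOn : ContinuousOn D (Set.Ioi 0) := hucOn.div hQcOn hQne
  have cy2 : ∀ r : ℝ, ContinuousOn (fun y : ℝ => r / y ^ 2) (Set.Ioi 0) :=
    fun r => continuousOn_const.div ((continuous_pow 2).continuousOn)
      (fun y hy => pow_ne_zero 2 (ne_of_gt hy))
  have cu2 : ContinuousOn (fun y => u y ^ 2) (Set.Ioi 0) := hucOn.pow 2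
  have cg1 : ContinuousOn g1 (Set.Ioi 0) := by
    rw [hg1]
    exact (((cy2 (-α)).sub continuousOn_const).mul (hψc.continuousOn.pow 2)).add
      (hwcOn.mul (by fun_prop))
  have cDF : ContinuousOn (fun y => D y * F y) (Set.Ioi 0) := hDcOn.mul hFcOn
  have cg2 : ContinuousOn (fun y => D y * F y + ψ y / Q y * (ψ y * Q y)) (Set.Ioi 0) :=
    cDF.add ((hψc.continuousOn.div hQcOn hQne).mul (hψc.mul hQcont).continuousOn)
  have cfH : ContinuousOn (fun y => F y ^ 2 / Q y ^ 2) (Set.Ioi 0) :=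
    (hFcOn.pow 2).div (hQcOn.pow 2) hQ2ne
  have cfC : ContinuousOn
      (fun y => Q y ^ 2 * (ψ y / Q y - 2 * w y * F y / Q y ^ 2) ^ 2) (Set.Ioi 0) := by
    refine ContinuousOn.mul (hQcOn.pow 2) (ContinuousOn.pow ?_ 2)
    exact (hψc.continuousOn.div hQcOn hQne).sub
      (((continuousOn_const.mul hwcOn).mul hFcOn).div (hQcOn.pow 2) hQ2ne)
  have cfW : ContinuousOn
      (fun y => (2 * α / y ^ 2 + 1 / 2) * (F y ^ 2 / Q y ^ 2)) (Set.Ioi 0) := by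
    exact ((cy2 (2*α)).add continuousOn_const).mul cfH
  have cg3 : ContinuousOn g3 (Set.Ioi 0) := by
    rw [hg3]
    refine ContinuousOn.div ?_ ((hQcOn.pow 2).pow 2) (fun y hy => pow_ne_zero 2 (hQ2ne y hy))
    refine ContinuousOn.sub (ContinuousOn.mul ?_ (hQcOn.pow 2)) ?_
    · refine ContinuousOn.add (ContinuousOn.mul ?_ (hFcOn.pow 2)) ?_
      · exact continuousOn_const.mul ((cy2 (-α)).sub continuousOn_const)
      · exact ((continuousOn_const.mul hwcOn).mul hFcOn).mul (hψc.mul hQcont).continuousOn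
    · exact ((continuousOn_const.mul hwcOn).mul (hFcOn.pow 2)).mul
        ((continuousOn_const.mul hQcOn).mul (hwcOn.mul hQcOn))
  have cf1 : ContinuousOn (fun y => deriv ψ y ^ 2 + V y * ψ y ^ 2) (Set.Ioi 0) := by
    refine ContinuousOn.add ((hψ'c.continuousOn).pow 2)
      (ContinuousOn.mul ?_ (hψc.continuousOn.pow 2))
    rw [funext hV]
    exact (((by fun_prop : ContinuousOn (fun y : ℝ => y ^ 2 / 16 + 1 / 4) (Set.Ioi 0)).add
      (cy2 A)).sub continuousOn_const)
  -- boundary terms vanish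
  have EqG1 : (∫ y in c..d, g1 y) = 0 := by
    rw [intervalIntegral.integral_eq_sub_of_hasDerivAt
      (fun y hy => hG1d y (hsubIcc hy)) (II g1 cg1)]
    simp [hψcd, hψdd]
  have EqG2 : (∫ y in c..d, (D y * F y + ψ y / Q y * (ψ y * Q y))) = 0 := by
    rw [intervalIntegral.integral_eq_sub_of_hasDerivAt
      (fun y hy => hG2d y (hsubIcc hy)) (II _ cg2)]
    simp [hψcd, hψdd, hFcd, hFdd]
  have EqG3 : (∫ y in c..d, g3 y) = 0 := by
    rw [intervalIntegral.integral_eq_sub_of_hasDerivAt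
      (fun y hy => hG3d y (hsubIcc hy)) (II _ cg3)]
    simp [hFcd, hFdd]
  -- transfer the two goal integrals to interval integrals
  have eqA : (∫ y in Set.Ioi (0:ℝ), (deriv ψ y ^ 2 + V y * ψ y ^ 2)) = ∫ y in c..d, u y ^ 2 := by
    rw [stmt12_L1 _ hc hcd (fun y hy => by
      show deriv ψ y ^ 2 + V y * ψ y ^ 2 = 0
      rw [hψ'0 y (hout y hy), hψ0 y (hout y hy)]
      ring)]
    rw [intervalIntegral.integral_congr hIA,
      intervalIntegral.integral_add (II _ cu2) (II _ cg1), EqG1, add_zero]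
  have eqS : (∫ y in Set.Ioi (0:ℝ), ψ y ^ 2) = ∫ y in c..d, ψ y ^ 2 :=
    stmt12_L1 _ hc hcd (fun y hy => by
      show ψ y ^ 2 = 0
      rw [hψ0 y (hout y hy)]; ring)
  set S := ∫ y in c..d, ψ y ^ 2 with hSdef
  set T := ∫ y in c..d, u y ^ 2 with hTdef
  set H := ∫ y in c..d, F y ^ 2 / Q y ^ 2 with hHdef
  -- step B : S ≤ T + H/4
  have hSB : S = ∫ y in c..d, -(D y * F y) := by
    rw [hSdef, intervalIntegral.integral_congr hIB,
      intervalIntegral.integral_sub (II _ cg2) (II _ cDF), EqG2, zero_sub,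
      ← intervalIntegral.integral_neg]
  have hB2 : S ≤ T + (1/4) * H := by
    have hmono : (∫ y in c..d, -(D y * F y))
        ≤ ∫ y in c..d, (u y ^ 2 + 1/4 * (F y ^ 2 / Q y ^ 2)) := by
      refine intervalIntegral.integral_mono_on hcd (II (fun y => -(D y * F y)) cDF.neg)
        ((II _ cu2).add ((II _ cfH).const_mul (1/4))) (fun y hy => ?_)
      have hy0 : (0:ℝ) < y := hsubIcc ((Set.uIcc_of_le hcd).symm ▸ hy)
      have hQy := hQne y hy0
      have h1 : D y * F y = u y * (F y / Q y) := by rw [hD]; ring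
      have h2 : F y ^ 2 / Q y ^ 2 = (F y / Q y) ^ 2 := (div_pow _ _ _).symm
      rw [h1, h2]
      nlinarith [sq_nonneg (u y + F y / Q y / 2)]
    rw [intervalIntegral.integral_add (II _ cu2) ((II _ cfH).const_mul (1/4)),
      intervalIntegral.integral_const_mul] at hmono
    calc S = ∫ y in c..d, -(D y * F y) := hSB
    _ ≤ T + (1/4) * H := hmono
  -- step C : H ≤ 2 S
  have hC : (1/2) * H ≤ S := by
    have hcongr : S = (∫ y in c..d, Q y ^ 2 * (ψ y / Q y - 2 * w y * F y / Q y ^ 2) ^ 2)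
        + (∫ y in c..d, (2 * α / y ^ 2 + 1 / 2) * (F y ^ 2 / Q y ^ 2)) := by
      rw [hSdef, intervalIntegral.integral_congr hIC,
        intervalIntegral.integral_add ((II _ cfC).add (II _ cfW)) (II _ cg3), EqG3, add_zero,
        intervalIntegral.integral_add (II _ cfC) (II _ cfW)]
    have h1 : 0 ≤ ∫ y in c..d, Q y ^ 2 * (ψ y / Q y - 2 * w y * F y / Q y ^ 2) ^ 2 :=
      intervalIntegral.integral_nonneg hcd (fun y hy => by positivity)
    have h2 : (1/2) * H ≤ ∫ y in c..d, (2 * α / y ^ 2 + 1 / 2) * (F y ^ 2 / Q y ^ 2) := by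
      rw [hHdef, ← intervalIntegral.integral_const_mul]
      refine intervalIntegral.integral_mono_on hcd ((II _ cfH).const_mul (1/2)) (II _ cfW)
        (fun y hy => ?_)
      have hy0 : (0:ℝ) < y := hsubIcc ((Set.uIcc_of_le hcd).symm ▸ hy)
      have h3 : (0:ℝ) ≤ F y ^ 2 / Q y ^ 2 := by positivity
      have h4 : (0:ℝ) ≤ 2 * α / y ^ 2 := by positivity
      nlinarith
    linarith
  rw [eqS, eqA]
  linarith
end
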